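/- arXiv:math/0108221 — 7 statements merged into one kernel-verified Lean document; each statement's English description precedes it below -/
import Mathlib

section
/- The Yangian R-matrix R(k) = (k·I + i·g·P)/(k + i·g) satisfies the additive Yang–Baxter equation R₁₂(k₁−k₂) R₁₃(k₁−k₃) R₂₃(k₂−k₃) = R₂₃(k₂−k₃) R₁₃(k₁−k₃) R₁₂(k₁−k₂) on ℂ^N ⊗ ℂ^N ⊗ ℂ^N. -/
open Matrix

/-- Operators on `ℂ^N ⊗ ℂ^N`. -/
abbrev TwoLeg (N : ℕ) (α : Type*) := Matrix (Fin N × Fin N) (Fin N × Fin N) α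

/-- Operators on `ℂ^N ⊗ ℂ^N ⊗ ℂ^N`. -/
abbrev ThreeLeg (N : ℕ) (α : Type*) :=
  Matrix (Fin N × Fin N × Fin N) (Fin N × Fin N × Fin N) α

/-- The permutation (flip) operator `P` on `ℂ^N ⊗ ℂ^N`. -/
def Pmat (N : ℕ) : TwoLeg N ℂ :=
  Matrix.of fun p q => if p.1 = q.2 ∧ p.2 = q.1 then 1 else 0

/-- The Yangian R-matrix `R(k) = (k·I + i g P)/(k + i g)`. -/
noncomputable def Ryang (N : ℕ) (g : ℝ) (k : ℂ) : TwoLeg N ℂ :=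
  (k + Complex.I * g)⁻¹ • (k • (1 : TwoLeg N ℂ) + (Complex.I * g) • Pmat N)

/-- Embed an operator on legs 1 and 2, acting as identity on leg 3. -/
def emb12 {N : ℕ} (M : TwoLeg N ℂ) : ThreeLeg N ℂ :=
  Matrix.of fun p q => M (p.1, p.2.1) (q.1, q.2.1) * (if p.2.2 = q.2.2 then 1 else 0)

/-- Embed an operator on legs 1 and 3, acting as identity on leg 2. -/
def emb13 {N : ℕ} (M : TwoLeg N ℂ) : ThreeLeg N ℂ :=
  Matrix.of fun p q => M (p.1, p.2.2) (q.1, q.2.2) * (if p.2.1 = q.2.1 then 1 else 0)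

/-- Embed an operator on legs 2 and 3, acting as identity on leg 1. -/
def emb23 {N : ℕ} (M : TwoLeg N ℂ) : ThreeLeg N ℂ :=
  Matrix.of fun p q => M (p.2.1, p.2.2) (q.2.1, q.2.2) * (if p.1 = q.1 then 1 else 0)

section aux

variable {N : ℕ}

lemma emb12_one : emb12 (1 : TwoLeg N ℂ) = 1 := by
  ext ⟨a,b,c⟩ ⟨d,e,f⟩
  simp [emb12, one_apply, Prod.ext_iff, and_assoc]; aesop

lemma emb13_one : emb13 (1 : TwoLeg N ℂ) = 1 := by
  ext ⟨a,b,c⟩ ⟨d,e,f⟩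
  simp [emb13, one_apply, Prod.ext_iff, and_assoc]; aesop

lemma emb23_one : emb23 (1 : TwoLeg N ℂ) = 1 := by
  ext ⟨a,b,c⟩ ⟨d,e,f⟩
  simp [emb23, one_apply, Prod.ext_iff, and_assoc]; aesop

lemma emb12_add (M M' : TwoLeg N ℂ) : emb12 (M + M') = emb12 M + emb12 M' := by
  ext p q; simp [emb12, add_mul]; split_ifs <;> simp

lemma emb13_add (M M' : TwoLeg N ℂ) : emb13 (M + M') = emb13 M + emb13 M' := by
  ext p q; simp [emb13, add_mul]; split_ifs <;> simp

lemma emb23_add (M M' : TwoLeg N ℂ) : emb23 (M + M') = emb23 M + emb23 M' := by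
  ext p q; simp [emb23, add_mul]; split_ifs <;> simp

lemma emb12_smul (c : ℂ) (M : TwoLeg N ℂ) : emb12 (c • M) = c • emb12 M := by
  ext p q; simp [emb12, mul_assoc]

lemma emb13_smul (c : ℂ) (M : TwoLeg N ℂ) : emb13 (c • M) = c • emb13 M := by
  ext p q; simp [emb13, mul_assoc]

lemma emb23_smul (c : ℂ) (M : TwoLeg N ℂ) : emb23 (c • M) = c • emb23 M := by
  ext p q; simp [emb23, mul_assoc]

lemma P12_mul_P13 :
    emb12 (Pmat N) * emb13 (Pmat N) = emb13 (Pmat N) * emb23 (Pmat N) := by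
  ext ⟨a,b,c⟩ ⟨d,e,f⟩
  simp only [emb12, emb13, emb23, Pmat, mul_apply, of_apply, Fintype.sum_prod_type, ite_and]
  simp
  split_ifs <;> simp_all

lemma P23_mul_P12 :
    emb23 (Pmat N) * emb12 (Pmat N) = emb12 (Pmat N) * emb13 (Pmat N) := by
  ext ⟨a,b,c⟩ ⟨d,e,f⟩
  simp only [emb12, emb13, emb23, Pmat, mul_apply, of_apply, Fintype.sum_prod_type, ite_and]
  simp
  split_ifs <;> simp_all

lemma P13_mul_P12 :
    emb13 (Pmat N) * emb12 (Pmat N) = emb23 (Pmat N) * emb13 (Pmat N) := by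
  ext ⟨a,b,c⟩ ⟨d,e,f⟩
  simp only [emb12, emb13, emb23, Pmat, mul_apply, of_apply, Fintype.sum_prod_type, ite_and]
  simp
  split_ifs <;> simp_all

lemma P12_mul_P23 :
    emb12 (Pmat N) * emb23 (Pmat N) = emb13 (Pmat N) * emb12 (Pmat N) := by
  ext ⟨a,b,c⟩ ⟨d,e,f⟩
  simp only [emb12, emb13, emb23, Pmat, mul_apply, of_apply, Fintype.sum_prod_type, ite_and]
  simp
  split_ifs <;> simp_all

lemma P23_sq : emb23 (Pmat N) * emb23 (Pmat N) = 1 := by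
  ext ⟨a,b,c⟩ ⟨d,e,f⟩
  simp only [emb23, Pmat, mul_apply, of_apply, Fintype.sum_prod_type, ite_and, one_apply,
    Prod.ext_iff]
  simp

lemma P12_sq : emb12 (Pmat N) * emb12 (Pmat N) = 1 := by
  ext ⟨a,b,c⟩ ⟨d,e,f⟩
  simp only [emb12, Pmat, mul_apply, of_apply, Fintype.sum_prod_type, ite_and, one_apply,
    Prod.ext_iff]
  simp
  split_ifs <;> simp_all

lemma P_cubic :
    emb12 (Pmat N) * (emb13 (Pmat N) * emb23 (Pmat N)) = emb13 (Pmat N) := by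
  rw [← P12_mul_P13, ← mul_assoc, P12_sq, one_mul]

lemma P_cubic' :
    emb23 (Pmat N) * (emb13 (Pmat N) * emb12 (Pmat N)) = emb13 (Pmat N) := by
  rw [P13_mul_P12, ← mul_assoc, P23_sq, one_mul]

end aux

/-- the Yangian R-matrix satisfies the additive Yang–Baxter equation
`R₁₂(k₁−k₂) R₁₃(k₁−k₃) R₂₃(k₂−k₃) = R₂₃(k₂−k₃) R₁₃(k₁−k₃) R₁₂(k₁−k₂)`. -/
theorem yangian_yang_baxter {N : ℕ} (g : ℝ) (k₁ k₂ k₃ : ℂ)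
    (h12 : (k₁ - k₂) + Complex.I * g ≠ 0)
    (h13 : (k₁ - k₃) + Complex.I * g ≠ 0)
    (h23 : (k₂ - k₃) + Complex.I * g ≠ 0) :
    emb12 (Ryang N g (k₁ - k₂)) * emb13 (Ryang N g (k₁ - k₃)) *
        emb23 (Ryang N g (k₂ - k₃)) =
      emb23 (Ryang N g (k₂ - k₃)) * emb13 (Ryang N g (k₁ - k₃)) *
        emb12 (Ryang N g (k₁ - k₂)) := by
  set a : ℂ := Complex.I * g with ha
  set u : ℂ := k₁ - k₂ with hu
  set v : ℂ := k₁ - k₃ with hv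
  set w : ℂ := k₂ - k₃ with hw
  have hvuw : v = u + w := by rw [hu, hv, hw]; ring
  set A := emb12 (Pmat N) with hA
  set B := emb13 (Pmat N) with hB
  set C := emb23 (Pmat N) with hC
  have e12 : emb12 (Ryang N g u) = (u + a)⁻¹ • (u • (1 : ThreeLeg N ℂ) + a • A) := by
    rw [Ryang, emb12_smul, emb12_add, emb12_smul, emb12_smul, emb12_one]
  have e13 : emb13 (Ryang N g v) = (v + a)⁻¹ • (v • (1 : ThreeLeg N ℂ) + a • B) := by
    rw [Ryang, emb13_smul, emb13_add, emb13_smul, emb13_smul, emb13_one]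
  have e23 : emb23 (Ryang N g w) = (w + a)⁻¹ • (w • (1 : ThreeLeg N ℂ) + a • C) := by
    rw [Ryang, emb23_smul, emb23_add, emb23_smul, emb23_smul, emb23_one]
  rw [e12, e13, e23]
  have key : (u • (1 : ThreeLeg N ℂ) + a • A) * ((v • 1 + a • B) * (w • 1 + a • C)) =
      (w • (1 : ThreeLeg N ℂ) + a • C) * ((v • 1 + a • B) * (u • 1 + a • A)) := by
    simp only [mul_add, add_mul, smul_mul_assoc, mul_smul_comm, smul_smul, one_mul, mul_one,
      smul_add]
    rw [P_cubic, P_cubic', P23_mul_P12, P12_mul_P23, ← P12_mul_P13, ← P13_mul_P12, hvuw]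
    module
  have pull : ∀ (x y z : ℂ) (X Y Z : ThreeLeg N ℂ),
      (x • X) * (y • Y) * (z • Z) = (x * y * z) • (X * (Y * Z)) := by
    intros
    simp only [smul_mul_assoc, mul_smul_comm, smul_smul, mul_assoc]
    congr 1
    ring
  rw [pull, pull, key]
  congr 1
  ring
end

section
/- Suppose in an associative algebra A, elements T₁, T₂, B₁, B₂ (matrices over A in auxiliary spaces 1 and 2) satisfy the RTT relation R₁₂ T₁ T₂ = T₂ T₁ R₁₂ for all spectral parameters, T has entries commuting with scalars, B₁, B₂ are scalar (central-entry) matrices satisfying the reflection equation R₁₂ B₁ R'₂₁ B₂ = B₂ R'₁₂ B₁ R̄₂₁, and all R-matrices are invertible with the unitarity relations R₁₂ R₂₁ = I, R̄₁₂ R̄₂₁ = I. Then b(k) := T(k) B(k) T(−k)⁻¹ satisfies the reflection equation R₁₂ b₁ R'₂₁ b₂ = b₂ R'₁₂ b₁ R̄₂₁. -/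
open Matrix

/-- Conjugation by the flip operator `P`: `flipM M = P ∘ M ∘ P`. -/
def flipM {N : ℕ} {α : Type*} (M : TwoLeg N α) : TwoLeg N α :=
  Matrix.of fun p q => M (p.2, p.1) (q.2, q.1)

/-- Embedding of an `N×N` matrix into auxiliary space 1: `M ↦ M ⊗ I`. -/
def leg1 {N : ℕ} {α : Type*} [MulZeroOneClass α] (M : Matrix (Fin N) (Fin N) α) :
    TwoLeg N α :=
  Matrix.of fun p q => if p.2 = q.2 then M p.1 q.1 else 0

/-- Embedding of an `N×N` matrix into auxiliary space 2: `M ↦ I ⊗ M`. -/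
def leg2 {N : ℕ} {α : Type*} [MulZeroOneClass α] (M : Matrix (Fin N) (Fin N) α) :
    TwoLeg N α :=
  Matrix.of fun p q => if p.1 = q.1 then M p.2 q.2 else 0

/-- Map a complex matrix to a matrix over the algebra `A`. -/
def cmap {N : ℕ} (A : Type*) [Ring A] [Algebra ℂ A] (M : TwoLeg N ℂ) : TwoLeg N A :=
  M.map (algebraMap ℂ A)

/-- The reflection operator `b(k) = T(k) B(k) T(−k)⁻¹`. -/
def bop {N : ℕ} {A : Type*} [Ring A] [Algebra ℂ A]
    (T Tinv : ℝ → Matrix (Fin N) (Fin N) A) (B : ℝ → Matrix (Fin N) (Fin N) ℂ)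
    (k : ℝ) : Matrix (Fin N) (Fin N) A :=
  T k * (B k).map (algebraMap ℂ A) * Tinv (-k)



section AuxLemmas
variable {N : ℕ} {α : Type*} [NonAssocRing α]

lemma leg1_mul (M M' : Matrix (Fin N) (Fin N) α) : leg1 (M * M') = leg1 M * leg1 M' := by
  ext ⟨p1,p2⟩ ⟨q1,q2⟩
  simp [leg1, Matrix.mul_apply, Fintype.sum_prod_type, ite_mul, mul_ite,
    Finset.sum_ite_eq, Finset.sum_ite_eq']

lemma leg2_mul (M M' : Matrix (Fin N) (Fin N) α) : leg2 (M * M') = leg2 M * leg2 M' := by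
  ext ⟨p1,p2⟩ ⟨q1,q2⟩
  simp [leg2, Matrix.mul_apply, Fintype.sum_prod_type, ite_mul, mul_ite,
    Finset.sum_ite_eq, Finset.sum_ite_eq']

lemma leg1_one : leg1 (1 : Matrix (Fin N) (Fin N) α) = 1 := by
  ext ⟨p1,p2⟩ ⟨q1,q2⟩
  simp only [leg1, Matrix.one_apply, Prod.ext_iff, Matrix.of_apply]
  by_cases h1 : p1 = q1 <;> by_cases h2 : p2 = q2 <;> simp [h1, h2]

lemma leg2_one : leg2 (1 : Matrix (Fin N) (Fin N) α) = 1 := by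
  ext ⟨p1,p2⟩ ⟨q1,q2⟩
  simp only [leg2, Matrix.one_apply, Prod.ext_iff, Matrix.of_apply]
  by_cases h1 : p1 = q1 <;> by_cases h2 : p2 = q2 <;> simp [h1, h2]

lemma leg1_mul_leg2 (M M' : Matrix (Fin N) (Fin N) α) :
    leg1 M * leg2 M' = Matrix.of fun p q => M p.1 q.1 * M' p.2 q.2 := by
  ext ⟨p1,p2⟩ ⟨q1,q2⟩
  simp [leg1, leg2, Matrix.mul_apply, Fintype.sum_prod_type, ite_mul, mul_ite,
    Finset.sum_ite_eq, Finset.sum_ite_eq']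

lemma leg2_mul_leg1 (M M' : Matrix (Fin N) (Fin N) α) :
    leg2 M' * leg1 M = Matrix.of fun p q => M' p.2 q.2 * M p.1 q.1 := by
  ext ⟨p1,p2⟩ ⟨q1,q2⟩
  simp [leg1, leg2, Matrix.mul_apply, Fintype.sum_prod_type, ite_mul, mul_ite,
    Finset.sum_ite_eq, Finset.sum_ite_eq']

lemma flipM_mul (M M' : TwoLeg N α) : flipM (M * M') = flipM M * flipM M' := by
  ext ⟨p1,p2⟩ ⟨q1,q2⟩
  simp only [flipM, Matrix.mul_apply, Matrix.of_apply, Fintype.sum_prod_type]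
  exact Finset.sum_comm

lemma flipM_leg1 (M : Matrix (Fin N) (Fin N) α) : flipM (leg1 M) = leg2 M := rfl

lemma flipM_leg2 (M : Matrix (Fin N) (Fin N) α) : flipM (leg2 M) = leg1 M := rfl

variable {A : Type*} [Ring A] [Algebra ℂ A]

lemma flipM_cmap (M : TwoLeg N ℂ) : flipM (cmap A M) = cmap A (flipM M) := rfl

lemma cmap_mul (M M' : TwoLeg N ℂ) : cmap A (M * M') = cmap A M * cmap A M' :=
  Matrix.map_mul

lemma cmap_leg1 (X : Matrix (Fin N) (Fin N) ℂ) :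
    cmap A (leg1 X) = leg1 (X.map (algebraMap ℂ A)) := by
  ext ⟨p1,p2⟩ ⟨q1,q2⟩
  simp [cmap, leg1, apply_ite (algebraMap ℂ A)]

lemma cmap_leg2 (X : Matrix (Fin N) (Fin N) ℂ) :
    cmap A (leg2 X) = leg2 (X.map (algebraMap ℂ A)) := by
  ext ⟨p1,p2⟩ ⟨q1,q2⟩
  simp [cmap, leg2, apply_ite (algebraMap ℂ A)]

lemma leg1_scalar_comm (X : Matrix (Fin N) (Fin N) ℂ) (M : Matrix (Fin N) (Fin N) A) :
    leg1 (X.map (algebraMap ℂ A)) * leg2 M = leg2 M * leg1 (X.map (algebraMap ℂ A)) := by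
  rw [leg1_mul_leg2, leg2_mul_leg1]
  ext ⟨p1,p2⟩ ⟨q1,q2⟩
  exact (Algebra.commutes (X p1 q1) (M p2 q2))

lemma leg2_scalar_comm (X : Matrix (Fin N) (Fin N) ℂ) (M : Matrix (Fin N) (Fin N) A) :
    leg1 M * leg2 (X.map (algebraMap ℂ A)) = leg2 (X.map (algebraMap ℂ A)) * leg1 M := by
  rw [leg1_mul_leg2, leg2_mul_leg1]
  ext ⟨p1,p2⟩ ⟨q1,q2⟩
  exact (Algebra.commutes (X p2 q2) (M p1 q1)).symm

end AuxLemmas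


lemma swap_conj {M : Type*} [Monoid M] {r a s s' : M}
    (hs : s * s' = 1) (hs' : s' * s = 1)
    (h : r * a * s = s * a * r) : s' * r * a = a * r * s' := by
  have h2 : s' * (r * a * s) * s' = s' * (s * a * r) * s' := by rw [h]
  have L : s' * (r * a * s) * s' = s' * (r * a) := by
    rw [← mul_assoc s' (r * a) s, mul_assoc (s' * (r * a)) s s', hs, mul_one]
  have Rr : s' * (s * a * r) * s' = a * r * s' := by
    rw [mul_assoc s a r, ← mul_assoc s' s (a * r), hs', one_mul]
  rw [mul_assoc]
  exact L.symm.trans (h2.trans Rr)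

lemma key {M : Type*} [Monoid M]
    (R12 R' R'' Rb T1 T2 S1 S2 S1' S2' B1 B2 : M)
    (hS1 : S1 * S1' = 1) (hS1' : S1' * S1 = 1)
    (hS2 : S2 * S2' = 1) (hS2' : S2' * S2 = 1)
    (h1 : R12 * T1 * T2 = T2 * T1 * R12)
    (h2 : R' * T2 * S1 = S1 * T2 * R')
    (h3 : R'' * T1 * S2 = S2 * T1 * R'')
    (h4 : Rb * S2 * S1 = S1 * S2 * Rb)
    (hre : R12 * B1 * R' * B2 = B2 * R'' * B1 * Rb)
    (cB1T2 : B1 * T2 = T2 * B1)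
    (cB1S2' : B1 * S2' = S2' * B1)
    (cB2T1 : T1 * B2 = B2 * T1)
    (cB2S1' : S1' * B2 = B2 * S1') :
    R12 * (T1 * B1 * S1') * R' * (T2 * B2 * S2') =
      (T2 * B2 * S2') * R'' * (T1 * B1 * S1') * Rb := by
  have d2 : S1' * R' * T2 = T2 * R' * S1' := swap_conj hS1 hS1' h2
  have d3 : S2' * R'' * T1 = T1 * R'' * S2' := swap_conj hS2 hS2' h3
  have d4 : S2' * S1' * Rb = Rb * S1' * S2' := by
    have e1 : S1' * Rb * S2 = S2 * Rb * S1' := swap_conj hS1 hS1' h4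
    exact swap_conj hS2 hS2' e1
  -- continuation forms
  have d2c : ∀ x, S1' * (R' * (T2 * x)) = T2 * (R' * (S1' * x)) := fun x => by
    simp only [← mul_assoc]; rw [d2]
  have d3c : ∀ x, S2' * (R'' * (T1 * x)) = T1 * (R'' * (S2' * x)) := fun x => by
    simp only [← mul_assoc]; rw [d3]
  have d4c : ∀ x, S2' * (S1' * (Rb * x)) = Rb * (S1' * (S2' * x)) := fun x => by
    simp only [← mul_assoc]; rw [d4]
  have h1c : ∀ x, R12 * (T1 * (T2 * x)) = T2 * (T1 * (R12 * x)) := fun x => by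
    simp only [← mul_assoc]; rw [h1]
  have hrec : ∀ x, R12 * (B1 * (R' * (B2 * x))) = B2 * (R'' * (B1 * (Rb * x))) := fun x => by
    simp only [← mul_assoc]; rw [hre]
  have cB1T2c : ∀ x, B1 * (T2 * x) = T2 * (B1 * x) := fun x => by
    simp only [← mul_assoc]; rw [cB1T2]
  have cB1S2'c : ∀ x, S2' * (B1 * x) = B1 * (S2' * x) := fun x => by
    simp only [← mul_assoc]; rw [← cB1S2']
  have cB2T1c : ∀ x, T1 * (B2 * x) = B2 * (T1 * x) := fun x => by
    simp only [← mul_assoc]; rw [cB2T1]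
  have cB2S1'c : ∀ x, S1' * (B2 * x) = B2 * (S1' * x) := fun x => by
    simp only [← mul_assoc]; rw [cB2S1']
  have main : ∀ x : M,
      R12 * (T1 * (B1 * (S1' * (R' * (T2 * (B2 * (S2' * x))))))) =
        T2 * (B2 * (S2' * (R'' * (T1 * (B1 * (S1' * (Rb * x))))))) := by
    intro x
    rw [d2c, cB1T2c, cB2S1'c, h1c, hrec, cB2T1c, d3c, cB1S2'c, d4c]
  have := main 1
  simp only [mul_one] at this
  simp only [mul_assoc]
  exact this



/-- if `T` satisfies the RTT relation, the scalar matrix `B`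
satisfies the reflection equation `R₁₂ B₁ R'₂₁ B₂ = B₂ R'₁₂ B₁ R̄₂₁`, and `R` is
unitary, then `b(k) = T(k) B(k) T(−k)⁻¹` satisfies the reflection equation
`R₁₂ b₁ R'₂₁ b₂ = b₂ R'₁₂ b₁ R̄₂₁`. -/
theorem reflection_operator_reflection_equation {N : ℕ} {A : Type*} [Ring A]
    [Algebra ℂ A]
    (R : ℝ → ℝ → TwoLeg N ℂ)
    (T Tinv : ℝ → Matrix (Fin N) (Fin N) A)
    (B : ℝ → Matrix (Fin N) (Fin N) ℂ)
    (hT : ∀ k, T k * Tinv k = 1 ∧ Tinv k * T k = 1)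
    (hunit : ∀ k₁ k₂ : ℝ, R k₁ k₂ * flipM (R k₂ k₁) = 1)
    (hRTT : ∀ k₁ k₂ : ℝ,
      cmap A (R k₁ k₂) * leg1 (T k₁) * leg2 (T k₂) =
        leg2 (T k₂) * leg1 (T k₁) * cmap A (R k₁ k₂))
    (hrefl : ∀ k₁ k₂ : ℝ,
      R k₁ k₂ * leg1 (B k₁) * flipM (R k₂ (-k₁)) * leg2 (B k₂) =
        leg2 (B k₂) * R k₁ (-k₂) * leg1 (B k₁) * flipM (R (-k₂) (-k₁))) :
    ∀ k₁ k₂ : ℝ,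
      cmap A (R k₁ k₂) * leg1 (bop T Tinv B k₁) * cmap A (flipM (R k₂ (-k₁))) *
          leg2 (bop T Tinv B k₂) =
        leg2 (bop T Tinv B k₂) * cmap A (R k₁ (-k₂)) * leg1 (bop T Tinv B k₁) *
          cmap A (flipM (R (-k₂) (-k₁))) := by
  intro k₁ k₂
  have f := algebraMap ℂ A
  have hS1 : leg1 (T (-k₁)) * leg1 (Tinv (-k₁)) = 1 := by
    rw [← leg1_mul, (hT (-k₁)).1, leg1_one]
  have hS1' : leg1 (Tinv (-k₁)) * leg1 (T (-k₁)) = 1 := by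
    rw [← leg1_mul, (hT (-k₁)).2, leg1_one]
  have hS2 : leg2 (T (-k₂)) * leg2 (Tinv (-k₂)) = 1 := by
    rw [← leg2_mul, (hT (-k₂)).1, leg2_one]
  have hS2' : leg2 (Tinv (-k₂)) * leg2 (T (-k₂)) = 1 := by
    rw [← leg2_mul, (hT (-k₂)).2, leg2_one]
  have h2 : cmap A (flipM (R k₂ (-k₁))) * leg2 (T k₂) * leg1 (T (-k₁)) =
      leg1 (T (-k₁)) * leg2 (T k₂) * cmap A (flipM (R k₂ (-k₁))) := by
    have := congrArg flipM (hRTT k₂ (-k₁))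
    simpa only [flipM_mul, flipM_leg1, flipM_leg2, flipM_cmap] using this
  have h4 : cmap A (flipM (R (-k₂) (-k₁))) * leg2 (T (-k₂)) * leg1 (T (-k₁)) =
      leg1 (T (-k₁)) * leg2 (T (-k₂)) * cmap A (flipM (R (-k₂) (-k₁))) := by
    have := congrArg flipM (hRTT (-k₂) (-k₁))
    simpa only [flipM_mul, flipM_leg1, flipM_leg2, flipM_cmap] using this
  have hre : cmap A (R k₁ k₂) * leg1 ((B k₁).map (algebraMap ℂ A)) *
        cmap A (flipM (R k₂ (-k₁))) * leg2 ((B k₂).map (algebraMap ℂ A)) =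
      leg2 ((B k₂).map (algebraMap ℂ A)) * cmap A (R k₁ (-k₂)) *
        leg1 ((B k₁).map (algebraMap ℂ A)) * cmap A (flipM (R (-k₂) (-k₁))) := by
    have := congrArg (cmap A) (hrefl k₁ k₂)
    simpa only [cmap_mul, cmap_leg1, cmap_leg2] using this
  simp only [bop, leg1_mul, leg2_mul]
  exact key (cmap A (R k₁ k₂)) (cmap A (flipM (R k₂ (-k₁)))) (cmap A (R k₁ (-k₂)))
    (cmap A (flipM (R (-k₂) (-k₁)))) (leg1 (T k₁)) (leg2 (T k₂)) (leg1 (T (-k₁)))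
    (leg2 (T (-k₂))) (leg1 (Tinv (-k₁))) (leg2 (Tinv (-k₂)))
    (leg1 ((B k₁).map (algebraMap ℂ A))) (leg2 ((B k₂).map (algebraMap ℂ A)))
    hS1 hS1' hS2 hS2' (hRTT k₁ k₂) h2 (hRTT k₁ (-k₂)) h4 hre
    (leg1_scalar_comm (B k₁) (T k₂)) (leg1_scalar_comm (B k₁) (Tinv (-k₂)))
    (leg2_scalar_comm (B k₂) (T k₁)) (leg2_scalar_comm (B k₂) (Tinv (-k₁)))
end

section
/- Suppose T satisfies the well-bred exchange relation T₁(k₁) a₂(k₂) = R₂₁(k₂,k₁) a₂(k₂) T₁(k₁) with the ZF generators a, and B(k) is a scalar matrix. Then b(k) := T(k) B(k) T(−k)⁻¹ satisfies a₁(k₁) b₂(k₂) = R₂₁(k₂,k₁) b₂(k₂) R₁₂(k₁,−k₂) a₁(k₁). -/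
open Matrix

private lemma delta_sum {N : ℕ} (R : ℝ → ℝ → TwoLeg N ℂ)
    (hunit : ∀ k₁ k₂ : ℝ, R k₁ k₂ * flipM (R k₂ k₁) = 1) (k₁ k₂ : ℝ)
    (i m m₂ i₂ : Fin N) :
    ∑ i₁ : Fin N, ∑ m₁ : Fin N, R k₂ k₁ (m, i) (m₁, i₁) * R k₁ k₂ (i₁, m₁) (m₂, i₂) =
      if (i, m) = (m₂, i₂) then 1 else 0 := by
  have hinv : flipM (R k₂ k₁) * R k₁ k₂ = 1 := mul_eq_one_comm.mp (hunit k₁ k₂)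
  have h2 : (flipM (R k₂ k₁) * R k₁ k₂) (i, m) (m₂, i₂)
      = (1 : TwoLeg N ℂ) (i, m) (m₂, i₂) := by rw [hinv]
  rw [Matrix.mul_apply] at h2
  rw [Fintype.sum_prod_type] at h2
  simpa [flipM, Matrix.one_apply] using h2


private lemma sum_swap4 {β : Type*} [AddCommMonoid β] {N : ℕ}
    (g : Fin N → Fin N → Fin N → Fin N → β) :
    ∑ a : Fin N, ∑ b : Fin N, ∑ c : Fin N, ∑ d : Fin N, g a b c d
      = ∑ c : Fin N, ∑ d : Fin N, ∑ b : Fin N, ∑ a : Fin N, g a b c d := by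
  calc
    ∑ a : Fin N, ∑ b : Fin N, ∑ c : Fin N, ∑ d : Fin N, g a b c d
        = ∑ b : Fin N, ∑ a : Fin N, ∑ c : Fin N, ∑ d : Fin N, g a b c d :=
          Finset.sum_comm
    _ = ∑ b : Fin N, ∑ c : Fin N, ∑ a : Fin N, ∑ d : Fin N, g a b c d :=
          Finset.sum_congr rfl fun _ _ => Finset.sum_comm
    _ = ∑ b : Fin N, ∑ c : Fin N, ∑ d : Fin N, ∑ a : Fin N, g a b c d :=
          Finset.sum_congr rfl fun _ _ => Finset.sum_congr rfl fun _ _ => Finset.sum_comm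
    _ = ∑ c : Fin N, ∑ b : Fin N, ∑ d : Fin N, ∑ a : Fin N, g a b c d :=
          Finset.sum_comm
    _ = ∑ c : Fin N, ∑ d : Fin N, ∑ b : Fin N, ∑ a : Fin N, g a b c d :=
          Finset.sum_congr rfl fun _ _ => Finset.sum_comm

private lemma aT_comm {N : ℕ} {A : Type*} [Ring A] [Algebra ℂ A]
    (R : ℝ → ℝ → TwoLeg N ℂ) (a : Fin N → ℝ → A)
    (T : ℝ → Matrix (Fin N) (Fin N) A)
    (hunit : ∀ k₁ k₂ : ℝ, R k₁ k₂ * flipM (R k₂ k₁) = 1)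
    (hTa : ∀ (k₁ k₂ : ℝ) (i j m : Fin N),
      T k₁ i j * a m k₂ =
        ∑ i' : Fin N, ∑ m' : Fin N,
          R k₂ k₁ (m, i) (m', i') • (a m' k₂ * T k₁ i' j))
    (k₁ k₂ : ℝ) (i m j : Fin N) :
    a i k₁ * T k₂ m j =
      ∑ m₁ : Fin N, ∑ i₁ : Fin N,
        R k₂ k₁ (m, i) (m₁, i₁) • (T k₂ m₁ j * a i₁ k₁) := by
  symm
  calc
    ∑ m₁ : Fin N, ∑ i₁ : Fin N, R k₂ k₁ (m, i) (m₁, i₁) • (T k₂ m₁ j * a i₁ k₁)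
        = ∑ m₁ : Fin N, ∑ i₁ : Fin N, ∑ i₂ : Fin N, ∑ m₂ : Fin N,
            (R k₂ k₁ (m, i) (m₁, i₁) * R k₁ k₂ (i₁, m₁) (m₂, i₂)) •
              (a m₂ k₁ * T k₂ i₂ j) := by
          simp only [hTa k₂ k₁, Finset.smul_sum, smul_smul]
    _ = ∑ i₂ : Fin N, ∑ m₂ : Fin N, ∑ i₁ : Fin N, ∑ m₁ : Fin N,
            (R k₂ k₁ (m, i) (m₁, i₁) * R k₁ k₂ (i₁, m₁) (m₂, i₂)) •
              (a m₂ k₁ * T k₂ i₂ j) :=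
          sum_swap4 _
    _ = ∑ i₂ : Fin N, ∑ m₂ : Fin N,
          (∑ i₁ : Fin N, ∑ m₁ : Fin N,
            R k₂ k₁ (m, i) (m₁, i₁) * R k₁ k₂ (i₁, m₁) (m₂, i₂)) •
              (a m₂ k₁ * T k₂ i₂ j) := by
          refine Finset.sum_congr rfl fun i₂ _ => Finset.sum_congr rfl fun m₂ _ => ?_
          rw [Finset.sum_smul]
          exact Finset.sum_congr rfl fun i₁ _ => by rw [Finset.sum_smul]
    _ = a i k₁ * T k₂ m j := by
          simp [delta_sum R hunit k₁ k₂ i m, Prod.mk.injEq, ite_smul, ite_and,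
            Finset.sum_ite_eq, Finset.sum_ite_eq']

private lemma aTinv_comm {N : ℕ} {A : Type*} [Ring A] [Algebra ℂ A]
    (R : ℝ → ℝ → TwoLeg N ℂ) (a : Fin N → ℝ → A)
    (T Tinv : ℝ → Matrix (Fin N) (Fin N) A)
    (hT : ∀ k, T k * Tinv k = 1 ∧ Tinv k * T k = 1)
    (hTa : ∀ (k₁ k₂ : ℝ) (i j m : Fin N),
      T k₁ i j * a m k₂ =
        ∑ i' : Fin N, ∑ m' : Fin N,
          R k₂ k₁ (m, i) (m', i') • (a m' k₂ * T k₁ i' j))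
    (k₁ k : ℝ) (j q n : Fin N) :
    a j k₁ * Tinv k q n =
      ∑ m₂ : Fin N, ∑ i₂ : Fin N,
        R k₁ k (j, m₂) (i₂, n) • (Tinv k q m₂ * a i₂ k₁) := by
  have hδ₁ : ∀ t, ∑ s : Fin N, Tinv k q s * T k s t
      = if q = t then (1 : A) else 0 := by
    intro t
    have h := congrFun (congrFun (hT k).2 q) t
    simpa [Matrix.mul_apply, Matrix.one_apply] using h
  have hδ₂ : ∀ i', ∑ t : Fin N, T k i' t * Tinv k t n
      = if i' = n then (1 : A) else 0 := by
    intro i'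
    have h := congrFun (congrFun (hT k).1 i') n
    simpa [Matrix.mul_apply, Matrix.one_apply] using h
  have step1 : ∑ t : Fin N, ∑ s : Fin N,
      Tinv k q s * (T k s t * a j k₁) * Tinv k t n = a j k₁ * Tinv k q n := by
    have h1 : ∀ t, ∑ s : Fin N, Tinv k q s * (T k s t * a j k₁) * Tinv k t n
        = (∑ s : Fin N, Tinv k q s * T k s t) * (a j k₁ * Tinv k t n) := by
      intro t
      rw [Finset.sum_mul]
      exact Finset.sum_congr rfl fun s _ => by
        rw [← mul_assoc (Tinv k q s), mul_assoc (Tinv k q s * T k s t)]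
    simp [h1, hδ₁, ite_mul, Finset.sum_ite_eq]
  have collapse : ∀ (U : A) (i' : Fin N),
      ∑ t : Fin N, U * T k i' t * Tinv k t n = if i' = n then U else 0 := by
    intro U i'
    have : ∀ t, U * T k i' t * Tinv k t n = U * (T k i' t * Tinv k t n) :=
      fun t => mul_assoc _ _ _
    rw [Finset.sum_congr rfl fun t _ => this t, ← Finset.mul_sum, hδ₂ i']
    split <;> simp
  calc
    a j k₁ * Tinv k q n
        = ∑ t : Fin N, ∑ s : Fin N,
            Tinv k q s * (T k s t * a j k₁) * Tinv k t n := step1.symm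
    _ = ∑ t : Fin N, ∑ s : Fin N, ∑ i' : Fin N, ∑ m' : Fin N,
          R k₁ k (j, s) (m', i') • (Tinv k q s * a m' k₁ * T k i' t * Tinv k t n) := by
        simp only [hTa k k₁, Finset.mul_sum, Finset.sum_mul, mul_smul_comm,
          smul_mul_assoc, mul_assoc]
    _ = ∑ i' : Fin N, ∑ m' : Fin N, ∑ s : Fin N, ∑ t : Fin N,
          R k₁ k (j, s) (m', i') • (Tinv k q s * a m' k₁ * T k i' t * Tinv k t n) :=
        sum_swap4 _
    _ = ∑ i' : Fin N, ∑ m' : Fin N, ∑ s : Fin N,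
          R k₁ k (j, s) (m', i') • (if i' = n then Tinv k q s * a m' k₁ else 0) := by
        refine Finset.sum_congr rfl fun i' _ => Finset.sum_congr rfl fun m' _ =>
          Finset.sum_congr rfl fun s _ => ?_
        rw [← Finset.smul_sum, collapse (Tinv k q s * a m' k₁) i']
    _ = ∑ m₂ : Fin N, ∑ i₂ : Fin N,
          R k₁ k (j, m₂) (i₂, n) • (Tinv k q m₂ * a i₂ k₁) := by
        rw [Finset.sum_comm]
        simp [smul_ite, Finset.sum_ite_eq, Finset.sum_ite_eq',
          Finset.sum_comm (f := fun m' s => R k₁ k (j, s) (m', n) • (Tinv k q s * a m' k₁))]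

private lemma sum_swap6 {β : Type*} [AddCommMonoid β] {N : ℕ}
    (f : Fin N → Fin N → Fin N → Fin N → Fin N → Fin N → β) :
    ∑ q : Fin N, ∑ p : Fin N, ∑ a : Fin N, ∑ b : Fin N, ∑ c : Fin N, ∑ d : Fin N,
        f q p a b c d
      = ∑ b : Fin N, ∑ a : Fin N, ∑ c : Fin N, ∑ d : Fin N, ∑ q : Fin N, ∑ p : Fin N,
        f q p a b c d := by
  calc
    ∑ q : Fin N, ∑ p : Fin N, ∑ a : Fin N, ∑ b : Fin N, ∑ c : Fin N, ∑ d : Fin N,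
        f q p a b c d
      = ∑ q : Fin N, ∑ a : Fin N, ∑ b : Fin N, ∑ c : Fin N, ∑ d : Fin N, ∑ p : Fin N,
        f q p a b c d := by
        refine Finset.sum_congr rfl fun q _ => ?_
        calc ∑ p : Fin N, ∑ a : Fin N, ∑ b : Fin N, ∑ c : Fin N, ∑ d : Fin N, f q p a b c d
            = ∑ a : Fin N, ∑ p : Fin N, ∑ b : Fin N, ∑ c : Fin N, ∑ d : Fin N, f q p a b c d :=
              Finset.sum_comm
          _ = ∑ a : Fin N, ∑ b : Fin N, ∑ p : Fin N, ∑ c : Fin N, ∑ d : Fin N, f q p a b c d :=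
              Finset.sum_congr rfl fun _ _ => Finset.sum_comm
          _ = ∑ a : Fin N, ∑ b : Fin N, ∑ c : Fin N, ∑ p : Fin N, ∑ d : Fin N, f q p a b c d :=
              Finset.sum_congr rfl fun _ _ => Finset.sum_congr rfl fun _ _ => Finset.sum_comm
          _ = ∑ a : Fin N, ∑ b : Fin N, ∑ c : Fin N, ∑ d : Fin N, ∑ p : Fin N, f q p a b c d :=
              Finset.sum_congr rfl fun _ _ => Finset.sum_congr rfl fun _ _ =>
                Finset.sum_congr rfl fun _ _ => Finset.sum_comm
    _ = ∑ a : Fin N, ∑ b : Fin N, ∑ c : Fin N, ∑ d : Fin N, ∑ q : Fin N, ∑ p : Fin N,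
        f q p a b c d := by
        calc ∑ q : Fin N, ∑ a : Fin N, ∑ b : Fin N, ∑ c : Fin N, ∑ d : Fin N, ∑ p : Fin N, f q p a b c d
            = ∑ a : Fin N, ∑ q : Fin N, ∑ b : Fin N, ∑ c : Fin N, ∑ d : Fin N, ∑ p : Fin N, f q p a b c d :=
              Finset.sum_comm
          _ = ∑ a : Fin N, ∑ b : Fin N, ∑ q : Fin N, ∑ c : Fin N, ∑ d : Fin N, ∑ p : Fin N, f q p a b c d :=
              Finset.sum_congr rfl fun _ _ => Finset.sum_comm
          _ = ∑ a : Fin N, ∑ b : Fin N, ∑ c : Fin N, ∑ q : Fin N, ∑ d : Fin N, ∑ p : Fin N, f q p a b c d :=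
              Finset.sum_congr rfl fun _ _ => Finset.sum_congr rfl fun _ _ => Finset.sum_comm
          _ = ∑ a : Fin N, ∑ b : Fin N, ∑ c : Fin N, ∑ d : Fin N, ∑ q : Fin N, ∑ p : Fin N, f q p a b c d :=
              Finset.sum_congr rfl fun _ _ => Finset.sum_congr rfl fun _ _ =>
                Finset.sum_congr rfl fun _ _ => Finset.sum_comm
    _ = ∑ b : Fin N, ∑ a : Fin N, ∑ c : Fin N, ∑ d : Fin N, ∑ q : Fin N, ∑ p : Fin N,
        f q p a b c d := Finset.sum_comm


/-- if `T` satisfies the well-bred exchange relation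
`T₁(k₁) a₂(k₂) = R₂₁(k₂,k₁) a₂(k₂) T₁(k₁)` (in components) and `B(k)` is a scalar
matrix, then `b(k) = T(k) B(k) T(−k)⁻¹` satisfies
`a₁(k₁) b₂(k₂) = R₂₁(k₂,k₁) b₂(k₂) R₁₂(k₁,−k₂) a₁(k₁)` (in components). -/
theorem exchange_a_b {N : ℕ} {A : Type*} [Ring A] [Algebra ℂ A]
    (R : ℝ → ℝ → TwoLeg N ℂ)
    (a : Fin N → ℝ → A)
    (T Tinv : ℝ → Matrix (Fin N) (Fin N) A)
    (B : ℝ → Matrix (Fin N) (Fin N) ℂ)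
    (hT : ∀ k, T k * Tinv k = 1 ∧ Tinv k * T k = 1)
    (hunit : ∀ k₁ k₂ : ℝ, R k₁ k₂ * flipM (R k₂ k₁) = 1)
    (hTa : ∀ (k₁ k₂ : ℝ) (i j m : Fin N),
      T k₁ i j * a m k₂ =
        ∑ i' : Fin N, ∑ m' : Fin N,
          R k₂ k₁ (m, i) (m', i') • (a m' k₂ * T k₁ i' j)) :
    ∀ (k₁ k₂ : ℝ) (i m n : Fin N),
      a i k₁ * bop T Tinv B k₂ m n =
        ∑ i₁ : Fin N, ∑ m₁ : Fin N, ∑ m₂ : Fin N, ∑ i₂ : Fin N,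
          (R k₂ k₁ (m, i) (m₁, i₁) * R k₁ (-k₂) (i₁, m₂) (i₂, n)) •
            (bop T Tinv B k₂ m₁ m₂ * a i₂ k₁) := by
  intro k₁ k₂ i m n
  -- expansion of a * bop entry
  have hA : a i k₁ * bop T Tinv B k₂ m n
      = ∑ q : Fin N, ∑ p : Fin N,
          B k₂ p q • (a i k₁ * (T k₂ m p * Tinv (-k₂) q n)) := by
    simp only [bop, Matrix.mul_apply, Matrix.map_apply, Finset.sum_mul, Finset.mul_sum,
      Algebra.algebraMap_eq_smul_one, mul_smul_comm, smul_mul_assoc, mul_one, mul_assoc]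
  -- key exchange of a past (T ... * Tinv ...)
  have key : ∀ p q : Fin N, a i k₁ * (T k₂ m p * Tinv (-k₂) q n)
      = ∑ m₁ : Fin N, ∑ i₁ : Fin N, ∑ m₂ : Fin N, ∑ i₂ : Fin N,
          (R k₂ k₁ (m, i) (m₁, i₁) * R k₁ (-k₂) (i₁, m₂) (i₂, n)) •
            (T k₂ m₁ p * (Tinv (-k₂) q m₂ * a i₂ k₁)) := by
    intro p q
    rw [← mul_assoc, aT_comm R a T hunit hTa k₁ k₂ i m, Finset.sum_mul]
    refine Finset.sum_congr rfl fun m₁ _ => ?_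
    rw [Finset.sum_mul]
    refine Finset.sum_congr rfl fun i₁ _ => ?_
    rw [smul_mul_assoc, mul_assoc, aTinv_comm R a T Tinv hT hTa k₁ (-k₂) i₁ q n,
      Finset.mul_sum, Finset.smul_sum]
    refine Finset.sum_congr rfl fun m₂ _ => ?_
    rw [Finset.mul_sum, Finset.smul_sum]
    refine Finset.sum_congr rfl fun i₂ _ => ?_
    rw [mul_smul_comm, smul_smul]
  -- expansion of bop * a entry
  have hbop : ∀ m₁ m₂ i₂ : Fin N, bop T Tinv B k₂ m₁ m₂ * a i₂ k₁
      = ∑ q : Fin N, ∑ p : Fin N,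
          B k₂ p q • (T k₂ m₁ p * (Tinv (-k₂) q m₂ * a i₂ k₁)) := by
    intro m₁ m₂ i₂
    simp only [bop, Matrix.mul_apply, Matrix.map_apply, Finset.sum_mul, Finset.mul_sum,
      Algebra.algebraMap_eq_smul_one, mul_smul_comm, smul_mul_assoc, mul_one, mul_assoc]
  rw [hA]
  simp only [key, Finset.smul_sum, smul_smul]
  rw [sum_swap6 (fun q p m₁ i₁ m₂ i₂ =>
    (B k₂ p q * (R k₂ k₁ (m, i) (m₁, i₁) * R k₁ (-k₂) (i₁, m₂) (i₂, n))) •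
      (T k₂ m₁ p * (Tinv (-k₂) q m₂ * a i₂ k₁)))]
  simp only [hbop, Finset.smul_sum, smul_smul]
  refine Finset.sum_congr rfl fun i₁ _ => Finset.sum_congr rfl fun m₁ _ =>
    Finset.sum_congr rfl fun m₂ _ => Finset.sum_congr rfl fun i₂ _ =>
    Finset.sum_congr rfl fun q _ => Finset.sum_congr rfl fun p _ => ?_
  rw [mul_comm]
end

section
/- Under the same hypotheses, with T₁ a₂† = a₂† R₁₂ T₁, the operator b(k) = T(k) B(k) T(−k)⁻¹ satisfies b₁(k₁) a₂†(k₂) = a₂†(k₂) R₁₂(k₁,k₂) b₁(k₁) R₂₁(k₂,−k₁). -/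
open Matrix

/-- Reorder a quadruple sum: pull the two inner sums out (and swap them). -/
lemma sum4_reorder {N : ℕ} {M : Type*} [AddCommMonoid M]
    (f : Fin N → Fin N → Fin N → Fin N → M) :
    (∑ a : Fin N, ∑ b : Fin N, ∑ c : Fin N, ∑ d : Fin N, f a b c d)
      = ∑ c : Fin N, ∑ d : Fin N, ∑ b : Fin N, ∑ a : Fin N, f a b c d := by
  calc (∑ a : Fin N, ∑ b : Fin N, ∑ c : Fin N, ∑ d : Fin N, f a b c d)
      = ∑ a : Fin N, ∑ c : Fin N, ∑ b : Fin N, ∑ d : Fin N, f a b c d := by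
        refine Finset.sum_congr rfl fun a _ => ?_; rw [Finset.sum_comm]
    _ = ∑ c : Fin N, ∑ a : Fin N, ∑ b : Fin N, ∑ d : Fin N, f a b c d := by
        rw [Finset.sum_comm]
    _ = ∑ c : Fin N, ∑ a : Fin N, ∑ d : Fin N, ∑ b : Fin N, f a b c d := by
        refine Finset.sum_congr rfl fun c _ => ?_
        refine Finset.sum_congr rfl fun a _ => ?_
        rw [Finset.sum_comm]
    _ = ∑ c : Fin N, ∑ d : Fin N, ∑ a : Fin N, ∑ b : Fin N, f a b c d := by
        refine Finset.sum_congr rfl fun c _ => ?_; rw [Finset.sum_comm]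
    _ = ∑ c : Fin N, ∑ d : Fin N, ∑ b : Fin N, ∑ a : Fin N, f a b c d := by
        refine Finset.sum_congr rfl fun c _ => ?_
        refine Finset.sum_congr rfl fun d _ => ?_
        rw [Finset.sum_comm]

/-- Reorder a sextuple sum blockwise: `(a b)(c d)(e g) ↦ (e g)(c d)(a b)`. -/
lemma sum6_reorder {N : ℕ} {M : Type*} [AddCommMonoid M]
    (f : Fin N → Fin N → Fin N → Fin N → Fin N → Fin N → M) :
    (∑ a : Fin N, ∑ b : Fin N, ∑ c : Fin N, ∑ d : Fin N, ∑ e : Fin N, ∑ g : Fin N,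
        f a b c d e g)
      = ∑ e : Fin N, ∑ g : Fin N, ∑ c : Fin N, ∑ d : Fin N, ∑ a : Fin N, ∑ b : Fin N,
          f a b c d e g := by
  have h : ∀ (F : (Fin N × Fin N) → (Fin N × Fin N) → (Fin N × Fin N) → M),
      (∑ u : Fin N × Fin N, ∑ v : Fin N × Fin N, ∑ w : Fin N × Fin N, F u v w)
        = ∑ w : Fin N × Fin N, ∑ v : Fin N × Fin N, ∑ u : Fin N × Fin N, F u v w := by
    intro F
    calc (∑ u : Fin N × Fin N, ∑ v : Fin N × Fin N, ∑ w : Fin N × Fin N, F u v w)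
        = ∑ u : Fin N × Fin N, ∑ w : Fin N × Fin N, ∑ v : Fin N × Fin N, F u v w :=
          Finset.sum_congr rfl fun u _ => Finset.sum_comm
      _ = ∑ w : Fin N × Fin N, ∑ u : Fin N × Fin N, ∑ v : Fin N × Fin N, F u v w :=
          Finset.sum_comm
      _ = ∑ w : Fin N × Fin N, ∑ v : Fin N × Fin N, ∑ u : Fin N × Fin N, F u v w :=
          Finset.sum_congr rfl fun w _ => Finset.sum_comm
  have := h (fun u v w => f u.1 u.2 v.1 v.2 w.1 w.2)
  simpa [Fintype.sum_prod_type] using this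

/-- Moving `adag` from the *left* of `Tinv` to the right, obtained by
sandwiching the exchange relation for `T` between two copies of `Tinv`. -/
lemma adag_Tinv_exchange {N : ℕ} {A : Type*} [Ring A] [Algebra ℂ A]
    (R : ℝ → ℝ → TwoLeg N ℂ) (adag : Fin N → ℝ → A)
    (T Tinv : ℝ → Matrix (Fin N) (Fin N) A)
    (hT : ∀ k, T k * Tinv k = 1 ∧ Tinv k * T k = 1)
    (hTadag : ∀ (k₁ k₂ : ℝ) (i j m : Fin N),
      T k₁ i j * adag m k₂ =
        ∑ m' : Fin N, ∑ i' : Fin N,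
          R k₁ k₂ (i, m') (i', m) • (adag m' k₂ * T k₁ i' j))
    (k k₂ : ℝ) (i j m : Fin N) :
    adag m k₂ * Tinv k i j =
      ∑ p : Fin N, ∑ m' : Fin N, R k k₂ (p, m') (j, m) • (Tinv k i p * adag m' k₂) := by
  have hd1 : ∀ q, (∑ p, Tinv k i p * T k p q) = if i = q then (1 : A) else 0 := by
    intro q
    have := congrArg (fun M => M i q) (hT k).2
    simpa [Matrix.mul_apply, Matrix.one_apply] using this
  have hd2 : ∀ p', (∑ q, T k p' q * Tinv k q j) = if p' = j then (1 : A) else 0 := by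
    intro p'
    have := congrArg (fun M => M p' j) (hT k).1
    simpa [Matrix.mul_apply, Matrix.one_apply] using this
  calc adag m k₂ * Tinv k i j
      = ∑ q, (if i = q then (1 : A) else 0) * (adag m k₂ * Tinv k q j) := by
        simp
    _ = ∑ q, (∑ p, Tinv k i p * T k p q) * (adag m k₂ * Tinv k q j) := by
        simp only [hd1]
    _ = ∑ q, ∑ p, Tinv k i p * (T k p q * adag m k₂) * Tinv k q j := by
        simp only [Finset.sum_mul, mul_assoc]
    _ = ∑ q, ∑ p, Tinv k i p *
          (∑ m' : Fin N, ∑ p' : Fin N,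
            R k k₂ (p, m') (p', m) • (adag m' k₂ * T k p' q)) * Tinv k q j := by
        simp only [hTadag]
    _ = ∑ p, ∑ m', ∑ p', R k k₂ (p, m') (p', m) •
          (Tinv k i p * adag m' k₂ * (∑ q, T k p' q * Tinv k q j)) := by
        rw [Finset.sum_comm]
        refine Finset.sum_congr rfl fun p _ => ?_
        simp only [Finset.mul_sum, Finset.sum_mul, mul_smul_comm, smul_mul_assoc,
          Finset.smul_sum, mul_assoc]
        rw [Finset.sum_comm]
        refine Finset.sum_congr rfl fun m' _ => ?_
        rw [Finset.sum_comm]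
    _ = ∑ p, ∑ m', R k k₂ (p, m') (j, m) • (Tinv k i p * adag m' k₂) := by
        simp only [hd2]
        simp [Finset.sum_ite_eq, mul_ite]

/-- Moving `adag` from the *right* of `Tinv` to the left: the inverse of
`adag_Tinv_exchange`, using unitarity of `R`. -/
lemma Tinv_adag_exchange {N : ℕ} {A : Type*} [Ring A] [Algebra ℂ A]
    (R : ℝ → ℝ → TwoLeg N ℂ) (adag : Fin N → ℝ → A)
    (T Tinv : ℝ → Matrix (Fin N) (Fin N) A)
    (hT : ∀ k, T k * Tinv k = 1 ∧ Tinv k * T k = 1)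
    (hunit : ∀ k₁ k₂ : ℝ, R k₁ k₂ * flipM (R k₂ k₁) = 1)
    (hTadag : ∀ (k₁ k₂ : ℝ) (i j m : Fin N),
      T k₁ i j * adag m k₂ =
        ∑ m' : Fin N, ∑ i' : Fin N,
          R k₁ k₂ (i, m') (i', m) • (adag m' k₂ * T k₁ i' j))
    (k k₂ : ℝ) (i j m : Fin N) :
    Tinv k i j * adag m k₂ =
      ∑ m' : Fin N, ∑ i' : Fin N,
        R k₂ k (m', i') (m, j) • (adag m' k₂ * Tinv k i i') := by
  have hu : ∀ p n : Fin N,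
      (∑ i' : Fin N, ∑ m' : Fin N, R k k₂ (p, n) (i', m') * R k₂ k (m', i') (m, j))
        = if (p, n) = (j, m) then (1 : ℂ) else 0 := by
    intro p n
    have := congrArg (fun M => M (p, n) (j, m)) (hunit k k₂)
    simpa [Matrix.mul_apply, Matrix.one_apply, flipM, Fintype.sum_prod_type] using this
  symm
  calc ∑ m' : Fin N, ∑ i' : Fin N,
        R k₂ k (m', i') (m, j) • (adag m' k₂ * Tinv k i i')
      = ∑ m' : Fin N, ∑ i' : Fin N, ∑ p : Fin N, ∑ n : Fin N,
          (R k k₂ (p, n) (i', m') * R k₂ k (m', i') (m, j)) • (Tinv k i p * adag n k₂) := by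
        simp only [adag_Tinv_exchange R adag T Tinv hT hTadag, Finset.smul_sum, smul_smul]
        refine Finset.sum_congr rfl fun m' _ => ?_
        refine Finset.sum_congr rfl fun i' _ => ?_
        refine Finset.sum_congr rfl fun p _ => ?_
        refine Finset.sum_congr rfl fun n _ => ?_
        rw [mul_comm]
    _ = ∑ p : Fin N, ∑ n : Fin N, ∑ i' : Fin N, ∑ m' : Fin N,
          (R k k₂ (p, n) (i', m') * R k₂ k (m', i') (m, j)) • (Tinv k i p * adag n k₂) := by
        exact sum4_reorder _
    _ = ∑ p : Fin N, ∑ n : Fin N,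
          (∑ i' : Fin N, ∑ m' : Fin N,
            R k k₂ (p, n) (i', m') * R k₂ k (m', i') (m, j)) • (Tinv k i p * adag n k₂) := by
        simp only [Finset.sum_smul]
    _ = Tinv k i j * adag m k₂ := by
        simp only [hu, Prod.mk.injEq]
        simp [ite_and, ite_smul, Finset.sum_ite_eq, Finset.sum_ite_eq']

/-- if `T` satisfies `T₁(k₁) a₂†(k₂) = a₂†(k₂) R₁₂(k₁,k₂) T₁(k₁)`
(in components) and `R` is unitary, then `b(k) = T(k) B(k) T(−k)⁻¹` satisfies
`b₁(k₁) a₂†(k₂) = a₂†(k₂) R₁₂(k₁,k₂) b₁(k₁) R₂₁(k₂,−k₁)` (in components). -/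
theorem exchange_b_adag {N : ℕ} {A : Type*} [Ring A] [Algebra ℂ A]
    (R : ℝ → ℝ → TwoLeg N ℂ)
    (adag : Fin N → ℝ → A)
    (T Tinv : ℝ → Matrix (Fin N) (Fin N) A)
    (B : ℝ → Matrix (Fin N) (Fin N) ℂ)
    (hT : ∀ k, T k * Tinv k = 1 ∧ Tinv k * T k = 1)
    (hunit : ∀ k₁ k₂ : ℝ, R k₁ k₂ * flipM (R k₂ k₁) = 1)
    (hTadag : ∀ (k₁ k₂ : ℝ) (i j m : Fin N),
      T k₁ i j * adag m k₂ =
        ∑ m' : Fin N, ∑ i' : Fin N,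
          R k₁ k₂ (i, m') (i', m) • (adag m' k₂ * T k₁ i' j)) :
    ∀ (k₁ k₂ : ℝ) (i j m : Fin N),
      bop T Tinv B k₁ i j * adag m k₂ =
        ∑ m₁ : Fin N, ∑ i₁ : Fin N, ∑ i₂ : Fin N, ∑ m₂ : Fin N,
          (R k₁ k₂ (i, m₁) (i₁, m₂) * R k₂ (-k₁) (m₂, i₂) (m, j)) •
            (adag m₁ k₂ * bop T Tinv B k₁ i₁ i₂) := by
  intro k₁ k₂ i j m
  -- version of `Tinv_adag_exchange` with the two sums swapped
  have aux2' : ∀ (q j : Fin N),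
      Tinv (-k₁) q j * adag m k₂ =
        ∑ i₂ : Fin N, ∑ m₂ : Fin N,
          R k₂ (-k₁) (m₂, i₂) (m, j) • (adag m₂ k₂ * Tinv (-k₁) q i₂) := by
    intro q j
    rw [Tinv_adag_exchange R adag T Tinv hT hunit hTadag (-k₁) k₂ q j m, Finset.sum_comm]
  have hmove : ∀ (c : ℂ) (x y z : A),
      x * algebraMap ℂ A c * (y * z) = c • (x * y * z) := by
    intro c x y z
    rw [mul_assoc, ← Algebra.smul_def, mul_smul_comm, mul_assoc]
  have hmove2 : ∀ (c : ℂ) (x z : A),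
      x * algebraMap ℂ A c * z = c • (x * z) := by
    intro c x z
    rw [mul_assoc, ← Algebra.smul_def, mul_smul_comm]
  calc bop T Tinv B k₁ i j * adag m k₂
      = ∑ q : Fin N, ∑ p : Fin N,
          T k₁ i p * algebraMap ℂ A (B k₁ p q) * (Tinv (-k₁) q j * adag m k₂) := by
        simp [bop, Matrix.mul_apply, Finset.sum_mul, mul_assoc, Matrix.map_apply]
    _ = ∑ q : Fin N, ∑ p : Fin N, ∑ i₂ : Fin N, ∑ m₂ : Fin N,
          R k₂ (-k₁) (m₂, i₂) (m, j) •
            (T k₁ i p * algebraMap ℂ A (B k₁ p q) * (adag m₂ k₂ * Tinv (-k₁) q i₂)) := by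
        simp only [aux2', Finset.mul_sum, mul_smul_comm]
    _ = ∑ q : Fin N, ∑ p : Fin N, ∑ i₂ : Fin N, ∑ m₂ : Fin N, ∑ m₁ : Fin N, ∑ i₁ : Fin N,
          (R k₁ k₂ (i, m₁) (i₁, m₂) * R k₂ (-k₁) (m₂, i₂) (m, j) * B k₁ p q) •
            (adag m₁ k₂ * T k₁ i₁ p * Tinv (-k₁) q i₂) := by
        refine Finset.sum_congr rfl fun q _ => Finset.sum_congr rfl fun p _ =>
          Finset.sum_congr rfl fun i₂ _ => Finset.sum_congr rfl fun m₂ _ => ?_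
        rw [hmove, hTadag]
        simp only [Finset.sum_mul, Finset.smul_sum, smul_mul_assoc, smul_smul]
        refine Finset.sum_congr rfl fun m₁ _ => Finset.sum_congr rfl fun i₁ _ => ?_
        rw [mul_assoc]
        congr 1
        ring
    _ = ∑ m₁ : Fin N, ∑ i₁ : Fin N, ∑ i₂ : Fin N, ∑ m₂ : Fin N, ∑ q : Fin N, ∑ p : Fin N,
          (R k₁ k₂ (i, m₁) (i₁, m₂) * R k₂ (-k₁) (m₂, i₂) (m, j) * B k₁ p q) •
            (adag m₁ k₂ * T k₁ i₁ p * Tinv (-k₁) q i₂) :=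
        sum6_reorder _
    _ = ∑ m₁ : Fin N, ∑ i₁ : Fin N, ∑ i₂ : Fin N, ∑ m₂ : Fin N,
          (R k₁ k₂ (i, m₁) (i₁, m₂) * R k₂ (-k₁) (m₂, i₂) (m, j)) •
            (adag m₁ k₂ * bop T Tinv B k₁ i₁ i₂) := by
        refine Finset.sum_congr rfl fun m₁ _ => Finset.sum_congr rfl fun i₁ _ =>
          Finset.sum_congr rfl fun i₂ _ => Finset.sum_congr rfl fun m₂ _ => ?_
        simp only [bop, Matrix.mul_apply, Matrix.map_apply, Finset.sum_mul,
          Finset.mul_sum, Finset.smul_sum]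
        refine Finset.sum_congr rfl fun q _ => Finset.sum_congr rfl fun p _ => ?_
        rw [hmove2, mul_smul_comm, smul_smul, mul_assoc, mul_assoc]
end

section
/- Suppose the elements a, a†, b satisfy the exchange relations of Theorem 1: a₁ a₂† = a₂† R₁₂ a₁ + δ₁₂ (treated formally), a₁ b₂ = R₂₁ b₂ R'₁₂ a₁, b₁ a₂† = a₂† R₁₂ b₁ R'₂₁, the reflection equation, and unitarity of R. Then ã(k) := ½(a(k) + b(k)a(−k)) and ã†(k) := ½(a†(k) + a†(−k)b(−k)) satisfy ã₁ ã₂† = ã₂† R₁₂ ã₁ + ½ δ₁₂ δ + ½ b₁₂, where δ₁₂ = δ(k₁−k₂)∑ᵢ eᵢ⊗eᵢ†, δ'₁₂ = δ(k₁+k₂)∑ᵢ eᵢ⊗eᵢ†, and b₁₂ = δ(k₁+k₂)∑ᵢⱼ bᵢⱼ(k₁) eᵢ⊗eⱼ†. -/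
open Matrix

/-- The matrix of reflection generators `b(k) = (bᵢⱼ(k))`. -/
def bmat {N : ℕ} {A : Type*} (b : Fin N → Fin N → ℝ → A) (k : ℝ) :
    Matrix (Fin N) (Fin N) A :=
  Matrix.of fun i j => b i j k

/-- The boundary annihilation generators `ã(k) = ½(a(k) + b(k) a(−k))`. -/
noncomputable def tilA {N : ℕ} {A : Type*} [Ring A] [Algebra ℂ A]
    (a : Fin N → ℝ → A) (b : Fin N → Fin N → ℝ → A) (i : Fin N) (k : ℝ) : A :=
  ((2 : ℂ)⁻¹) • (a i k + ∑ j : Fin N, b i j k * a j (-k))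

/-- The boundary creation generators `ã†(k) = ½(a†(k) + a†(−k) b(−k))`. -/
noncomputable def tilAdag {N : ℕ} {A : Type*} [Ring A] [Algebra ℂ A]
    (adag : Fin N → ℝ → A) (b : Fin N → Fin N → ℝ → A) (i : Fin N) (k : ℝ) : A :=
  ((2 : ℂ)⁻¹) • (adag i k + ∑ j : Fin N, adag j (-k) * b j i (-k))


set_option linter.unusedSectionVars false
set_option maxHeartbeats 1600000

section Helpers
variable {N : ℕ} {A : Type*} [Ring A] [Algebra ℂ A]

lemma unit_entry (R : ℝ → ℝ → TwoLeg N ℂ)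
    (hunit : ∀ k₁ k₂ : ℝ, R k₁ k₂ * flipM (R k₂ k₁) = 1)
    (k₁ k₂ : ℝ) (p : Fin N × Fin N) (x y : Fin N) :
    ∑ u, ∑ v, R k₁ k₂ p (u, v) * R k₂ k₁ (v, u) (y, x)
      = if p = (x, y) then (1 : ℂ) else 0 := by
  have h : (R k₁ k₂ * flipM (R k₂ k₁)) p (x, y) = (1 : TwoLeg N ℂ) p (x, y) := by
    rw [hunit]
  simpa [Matrix.mul_apply, flipM, Matrix.one_apply, Fintype.sum_prod_type] using h

lemma bb_entry (b : Fin N → Fin N → ℝ → A)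
    (hbb : ∀ k : ℝ, bmat b k * bmat b (-k) = 1) (k : ℝ) (i j : Fin N) :
    ∑ m, b i m k * b m j (-k) = if i = j then (1 : A) else 0 := by
  have h : (bmat b k * bmat b (-k)) i j = (1 : Matrix (Fin N) (Fin N) A) i j := by
    rw [hbb]
  simpa [Matrix.mul_apply, bmat, Matrix.one_apply] using h

end Helpers

section H2
variable {N : ℕ} {A : Type*} [Ring A] [Algebra ℂ A]

lemma alg_sand1 (c₁ c₂ : ℂ) (x y : A) :
    algebraMap ℂ A c₁ * x * algebraMap ℂ A c₂ * y = (c₁ * c₂) • (x * y) := by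
  rw [Algebra.smul_def, _root_.map_mul, mul_assoc (algebraMap ℂ A c₁) x,
    ← Algebra.commutes c₂ x, ← mul_assoc, mul_assoc, mul_assoc]

lemma alg_sand2 (c₁ c₂ : ℂ) (x y : A) :
    x * algebraMap ℂ A c₁ * y * algebraMap ℂ A c₂ = (c₁ * c₂) • (x * y) := by
  rw [Algebra.smul_def, _root_.map_mul, ← Algebra.commutes c₁ x,
    mul_assoc (algebraMap ℂ A c₁ * x) y, ← Algebra.commutes c₂ y,
    ← mul_assoc, mul_assoc (algebraMap ℂ A c₁), ← Algebra.commutes c₂ x,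
    ← mul_assoc, ← mul_assoc, mul_assoc, mul_assoc]

end H2

section H3
variable {N : ℕ} {A : Type*} [Ring A] [Algebra ℂ A]

lemma quad1 (M₁ M₂ : TwoLeg N ℂ) (B C : Matrix (Fin N) (Fin N) A) (p q : Fin N × Fin N) :
    (cmap A M₁ * leg1 B * cmap A M₂ * leg2 C) p q
      = ∑ x, ∑ w, ∑ v, ∑ u, (M₁ p (u, v) * M₂ (w, v) (q.1, x)) • (B u w * C x q.2) := by
  simp only [Matrix.mul_apply, cmap, leg1, leg2, Matrix.map_apply, Matrix.of_apply,
    Fintype.sum_prod_type, Finset.sum_mul, Finset.mul_sum, mul_ite, ite_mul, mul_zero,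
    zero_mul, Finset.sum_ite_eq, Finset.sum_ite_eq', Finset.mem_univ, if_true,
    Finset.sum_ite_irrel, Finset.sum_const_zero, alg_sand1]

lemma quad2 (M₁ M₂ : TwoLeg N ℂ) (B C : Matrix (Fin N) (Fin N) A) (p q : Fin N × Fin N) :
    (leg2 C * cmap A M₁ * leg1 B * cmap A M₂) p q
      = ∑ w, ∑ v, ∑ u, ∑ n, (M₁ (p.1, n) (u, v) * M₂ (w, v) q) • (C p.2 n * B u w) := by
  simp only [Matrix.mul_apply, cmap, leg1, leg2, Matrix.map_apply, Matrix.of_apply,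
    Fintype.sum_prod_type, Finset.sum_mul, Finset.mul_sum, mul_ite, ite_mul, mul_zero,
    zero_mul, Finset.sum_ite_eq, Finset.sum_ite_eq', Finset.mem_univ, if_true,
    Finset.sum_ite_irrel, Finset.sum_const_zero, alg_sand2]

end H3

section H4
variable {N : ℕ} {A : Type*} [Ring A] [Algebra ℂ A]

lemma refl_entry (R : ℝ → ℝ → TwoLeg N ℂ) (b : Fin N → Fin N → ℝ → A)
    (hrefl : ∀ k₁ k₂ : ℝ,
      cmap A (R k₁ k₂) * leg1 (bmat b k₁) * cmap A (flipM (R k₂ (-k₁))) *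
          leg2 (bmat b k₂) =
        leg2 (bmat b k₂) * cmap A (R k₁ (-k₂)) * leg1 (bmat b k₁) *
          cmap A (flipM (R (-k₂) (-k₁))))
    (k₁ k₂ : ℝ) (i m₁ c₁ d₂ : Fin N) :
    ∑ x, ∑ w, ∑ v, ∑ u,
        (R k₁ (-k₂) (i, m₁) (u, v) * R (-k₂) (-k₁) (v, w) (x, c₁)) •
          (b u w k₁ * b x d₂ (-k₂))
      = ∑ w, ∑ v, ∑ u, ∑ n,
          (R k₁ k₂ (i, n) (u, v) * R k₂ (-k₁) (v, w) (d₂, c₁)) •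
            (b m₁ n (-k₂) * b u w k₁) := by
  have h := hrefl k₁ (-k₂)
  simp only [neg_neg] at h
  have h2 : (cmap A (R k₁ (-k₂)) * leg1 (bmat b k₁) * cmap A (flipM (R (-k₂) (-k₁))) *
        leg2 (bmat b (-k₂))) (i, m₁) (c₁, d₂) =
      (leg2 (bmat b (-k₂)) * cmap A (R k₁ k₂) * leg1 (bmat b k₁) *
        cmap A (flipM (R k₂ (-k₁)))) (i, m₁) (c₁, d₂) := by rw [h]
  rw [quad1, quad2] at h2
  simpa [flipM, bmat] using h2

end H4

section P2
variable {N : ℕ} {A : Type*} [Ring A] [Algebra ℂ A]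

lemma P2 (R : ℝ → ℝ → TwoLeg N ℂ) (a adag : Fin N → ℝ → A) (b : Fin N → Fin N → ℝ → A)
    (hunit : ∀ k₁ k₂ : ℝ, R k₁ k₂ * flipM (R k₂ k₁) = 1)
    (haad : ∀ (k₁ k₂ : ℝ) (i j : Fin N),
      a i k₁ * adag j k₂ =
        (∑ i' : Fin N, ∑ j' : Fin N,
          R k₁ k₂ (i, j') (i', j) • (adag j' k₂ * a i' k₁)) +
        (if k₁ = k₂ ∧ i = j then (1 : A) else 0))
    (hab : ∀ (k₁ k₂ : ℝ) (i m n : Fin N),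
      a i k₁ * b m n k₂ =
        ∑ i₁ : Fin N, ∑ m₁ : Fin N, ∑ m₂ : Fin N, ∑ i₂ : Fin N,
          (R k₂ k₁ (m, i) (m₁, i₁) * R k₁ (-k₂) (i₁, m₂) (i₂, n)) •
            (b m₁ m₂ k₂ * a i₂ k₁))
    (k₁ k₂ : ℝ) (i j : Fin N) :
    a i k₁ * (∑ n, adag n (-k₂) * b n j (-k₂))
      = (∑ i', ∑ j', R k₁ k₂ (i, j') (i', j) •
          ((∑ n, adag n (-k₂) * b n j' (-k₂)) * a i' k₁))
        + (if k₁ = -k₂ then b i j k₁ else 0) := by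
  have hab' : ∀ (i' n : Fin N), a i' k₁ * b n j (-k₂) =
      ∑ i₁, ∑ m₁, ∑ m₂, ∑ i₂,
        (R (-k₂) k₁ (n, i') (m₁, i₁) * R k₁ k₂ (i₁, m₂) (i₂, j)) •
          (b m₁ m₂ (-k₂) * a i₂ k₁) := by
    intro i' n
    simpa [neg_neg] using hab k₁ (-k₂) i' n j
  rw [Finset.mul_sum]
  conv_lhs => enter [2, n]; rw [← mul_assoc, haad k₁ (-k₂) i n, add_mul]
  rw [Finset.sum_add_distrib]
  have hδ : (∑ n, (if k₁ = -k₂ ∧ i = n then (1:A) else 0) * b n j (-k₂))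
      = if k₁ = -k₂ then b i j k₁ else 0 := by
    simp only [ite_and, ite_mul, one_mul, zero_mul, Finset.sum_ite_irrel,
      Finset.sum_const_zero, Finset.sum_ite_eq, Finset.mem_univ, if_true]
    split_ifs with h
    · rw [h]
    · rfl
  rw [hδ]
  have hmain : (∑ n, (∑ i', ∑ n', R k₁ (-k₂) (i, n') (i', n) • (adag n' (-k₂) * a i' k₁))
        * b n j (-k₂))
      = ∑ i', ∑ j', R k₁ k₂ (i, j') (i', j) •
          ((∑ n, adag n (-k₂) * b n j' (-k₂)) * a i' k₁) := by
    simp only [Finset.sum_mul, smul_mul_assoc, mul_assoc]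
    conv_lhs => enter [2, n, 2, i', 2, n']; rw [hab' i' n]
    simp only [Finset.mul_sum, Finset.smul_sum, mul_smul_comm, smul_smul]
    -- reorder sums: (n,i',n',i1,m1,m2,i2) -> (n',i1,m1,m2,i2,i',n)
    rw [Finset.sum_comm]
    conv_lhs => enter [2, i']; rw [Finset.sum_comm]
    conv_lhs => enter [2, i', 2, n']; rw [Finset.sum_comm]
    conv_lhs => enter [2, i', 2, n', 2, i₁]; rw [Finset.sum_comm]
    conv_lhs => enter [2, i', 2, n', 2, i₁, 2, m₁]; rw [Finset.sum_comm]
    conv_lhs => enter [2, i', 2, n', 2, i₁, 2, m₁, 2, m₂]; rw [Finset.sum_comm]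
    rw [Finset.sum_comm]
    conv_lhs => enter [2, n']; rw [Finset.sum_comm]
    conv_lhs => enter [2, n', 2, i₁]; rw [Finset.sum_comm]
    conv_lhs => enter [2, n', 2, i₁, 2, m₁]; rw [Finset.sum_comm]
    conv_lhs => enter [2, n', 2, i₁, 2, m₁, 2, m₂]; rw [Finset.sum_comm]
    have hc : ∀ (n' i₁ m₁ : Fin N) (c₃ : ℂ) (X : A),
        (∑ i', ∑ n, (R k₁ (-k₂) (i, n') (i', n) *
            (R (-k₂) k₁ (n, i') (m₁, i₁) * c₃)) • X)
          = if (i, n') = (i₁, m₁) then c₃ • X else 0 := by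
      intro n' i₁ m₁ c₃ X
      have e : ∀ i' n : Fin N, (R k₁ (-k₂) (i, n') (i', n) *
          (R (-k₂) k₁ (n, i') (m₁, i₁) * c₃)) • X
          = (R k₁ (-k₂) (i, n') (i', n) * R (-k₂) k₁ (n, i') (m₁, i₁)) • (c₃ • X) := by
        intro i' n; rw [← mul_assoc, mul_smul]
      simp only [e, ← Finset.sum_smul]
      rw [unit_entry R hunit k₁ (-k₂) (i, n') i₁ m₁]
      simp [ite_smul]
    simp only [hc]
    simp only [Prod.mk.injEq, ite_and, Finset.sum_ite_irrel, Finset.sum_const_zero,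
      Finset.sum_ite_eq, Finset.mem_univ, if_true]
    -- RHS
    conv_lhs => enter [2, y]; rw [Finset.sum_comm]
    rw [Finset.sum_comm]
    conv_lhs => enter [2, y]; rw [Finset.sum_comm]
  rw [hmain]
end P2

section P3
variable {N : ℕ} {A : Type*} [Ring A] [Algebra ℂ A]

lemma P3 (R : ℝ → ℝ → TwoLeg N ℂ) (a adag : Fin N → ℝ → A) (b : Fin N → Fin N → ℝ → A)
    (hunit : ∀ k₁ k₂ : ℝ, R k₁ k₂ * flipM (R k₂ k₁) = 1)
    (haad : ∀ (k₁ k₂ : ℝ) (i j : Fin N),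
      a i k₁ * adag j k₂ =
        (∑ i' : Fin N, ∑ j' : Fin N,
          R k₁ k₂ (i, j') (i', j) • (adag j' k₂ * a i' k₁)) +
        (if k₁ = k₂ ∧ i = j then (1 : A) else 0))
    (hbad : ∀ (k₁ k₂ : ℝ) (i j m : Fin N),
      b i j k₁ * adag m k₂ =
        ∑ m₁ : Fin N, ∑ i₁ : Fin N, ∑ i₂ : Fin N, ∑ m₂ : Fin N,
          (R k₁ k₂ (i, m₁) (i₁, m₂) * R k₂ (-k₁) (m₂, i₂) (m, j)) •
            (adag m₁ k₂ * b i₁ i₂ k₁))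
    (k₁ k₂ : ℝ) (i j : Fin N) :
    (∑ p, b i p k₁ * a p (-k₁)) * adag j k₂
      = (∑ i', ∑ j', R k₁ k₂ (i, j') (i', j) •
          (adag j' k₂ * (∑ m, b i' m k₁ * a m (-k₁))))
        + (if k₁ = -k₂ then b i j k₁ else 0) := by
  rw [Finset.sum_mul]
  conv_lhs => enter [2, p]; rw [mul_assoc, haad (-k₁) k₂ p j, mul_add]
  rw [Finset.sum_add_distrib]
  have hδ : (∑ p, b i p k₁ * (if -k₁ = k₂ ∧ p = j then (1:A) else 0))
      = if k₁ = -k₂ then b i j k₁ else 0 := by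
    simp only [mul_ite, mul_one, mul_zero, ite_and, Finset.sum_ite_irrel,
      Finset.sum_const_zero, Finset.sum_ite_eq', Finset.mem_univ, if_true,
      neg_eq_iff_eq_neg]
  rw [hδ]
  have hmain : (∑ p, b i p k₁ *
        (∑ p', ∑ j', R (-k₁) k₂ (p, j') (p', j) • (adag j' k₂ * a p' (-k₁))))
      = ∑ i', ∑ j', R k₁ k₂ (i, j') (i', j) •
          (adag j' k₂ * (∑ m, b i' m k₁ * a m (-k₁))) := by
    simp only [Finset.mul_sum, mul_smul_comm, ← mul_assoc]
    conv_lhs => enter [2, p, 2, p', 2, j', 2, 1]; rw [hbad k₁ k₂ i p j']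
    simp only [Finset.sum_mul, smul_mul_assoc, Finset.smul_sum, smul_smul, mul_assoc]
    -- reorder (p,p',j',m₁,i₁,i₂,m₂) -> (p',m₁,i₁,i₂,m₂,j',p)
    rw [Finset.sum_comm]
    conv_lhs => enter [2, p']; rw [Finset.sum_comm]
    conv_lhs => enter [2, p', 2, j']; rw [Finset.sum_comm]
    conv_lhs => enter [2, p', 2, j', 2, m₁]; rw [Finset.sum_comm]
    conv_lhs => enter [2, p', 2, j', 2, m₁, 2, i₁]; rw [Finset.sum_comm]
    conv_lhs => enter [2, p', 2, j', 2, m₁, 2, i₁, 2, i₂]; rw [Finset.sum_comm]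
    conv_lhs => enter [2, p']; rw [Finset.sum_comm]
    conv_lhs => enter [2, p', 2, m₁]; rw [Finset.sum_comm]
    conv_lhs => enter [2, p', 2, m₁, 2, i₁]; rw [Finset.sum_comm]
    conv_lhs => enter [2, p', 2, m₁, 2, i₁, 2, i₂]; rw [Finset.sum_comm]
    have hc : ∀ (p' m₂ i₂ : Fin N) (c₂ : ℂ) (X : A),
        (∑ j', ∑ p, (R (-k₁) k₂ (p, j') (p', j) *
            (c₂ * R k₂ (-k₁) (m₂, i₂) (j', p))) • X)
          = if (m₂, i₂) = (j, p') then c₂ • X else 0 := by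
      intro p' m₂ i₂ c₂ X
      have e : ∀ j' p : Fin N, (R (-k₁) k₂ (p, j') (p', j) *
          (c₂ * R k₂ (-k₁) (m₂, i₂) (j', p))) • X
          = (R k₂ (-k₁) (m₂, i₂) (j', p) * R (-k₁) k₂ (p, j') (p', j)) • (c₂ • X) := by
        intro j' p
        rw [show R (-k₁) k₂ (p, j') (p', j) * (c₂ * R k₂ (-k₁) (m₂, i₂) (j', p))
            = (R k₂ (-k₁) (m₂, i₂) (j', p) * R (-k₁) k₂ (p, j') (p', j)) * c₂ from by
          ring, mul_smul]
      simp only [e, ← Finset.sum_smul]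
      rw [unit_entry R hunit k₂ (-k₁) (m₂, i₂) j p']
      simp [ite_smul]
    simp only [hc]
    simp only [Prod.mk.injEq, ite_and, Finset.sum_ite_irrel, Finset.sum_const_zero,
      Finset.sum_ite_eq, Finset.sum_ite_eq', Finset.mem_univ, if_true]
    rw [Finset.sum_comm]
    conv_lhs => enter [2, m₁]; rw [Finset.sum_comm]
    rw [Finset.sum_comm]
  rw [hmain]
end P3

section P4
variable {N : ℕ} {A : Type*} [Ring A] [Algebra ℂ A]

lemma P4 (R : ℝ → ℝ → TwoLeg N ℂ) (a adag : Fin N → ℝ → A) (b : Fin N → Fin N → ℝ → A)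
    (hunit : ∀ k₁ k₂ : ℝ, R k₁ k₂ * flipM (R k₂ k₁) = 1)
    (haad : ∀ (k₁ k₂ : ℝ) (i j : Fin N),
      a i k₁ * adag j k₂ =
        (∑ i' : Fin N, ∑ j' : Fin N,
          R k₁ k₂ (i, j') (i', j) • (adag j' k₂ * a i' k₁)) +
        (if k₁ = k₂ ∧ i = j then (1 : A) else 0))
    (hab : ∀ (k₁ k₂ : ℝ) (i m n : Fin N),
      a i k₁ * b m n k₂ =
        ∑ i₁ : Fin N, ∑ m₁ : Fin N, ∑ m₂ : Fin N, ∑ i₂ : Fin N,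
          (R k₂ k₁ (m, i) (m₁, i₁) * R k₁ (-k₂) (i₁, m₂) (i₂, n)) •
            (b m₁ m₂ k₂ * a i₂ k₁))
    (hbad : ∀ (k₁ k₂ : ℝ) (i j m : Fin N),
      b i j k₁ * adag m k₂ =
        ∑ m₁ : Fin N, ∑ i₁ : Fin N, ∑ i₂ : Fin N, ∑ m₂ : Fin N,
          (R k₁ k₂ (i, m₁) (i₁, m₂) * R k₂ (-k₁) (m₂, i₂) (m, j)) •
            (adag m₁ k₂ * b i₁ i₂ k₁))
    (hrefl : ∀ k₁ k₂ : ℝ,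
      cmap A (R k₁ k₂) * leg1 (bmat b k₁) * cmap A (flipM (R k₂ (-k₁))) *
          leg2 (bmat b k₂) =
        leg2 (bmat b k₂) * cmap A (R k₁ (-k₂)) * leg1 (bmat b k₁) *
          cmap A (flipM (R (-k₂) (-k₁))))
    (hbb : ∀ k : ℝ, bmat b k * bmat b (-k) = 1)
    (k₁ k₂ : ℝ) (i j : Fin N) :
    (∑ p, b i p k₁ * a p (-k₁)) * (∑ n, adag n (-k₂) * b n j (-k₂))
      = (∑ i', ∑ j', R k₁ k₂ (i, j') (i', j) •
          ((∑ n, adag n (-k₂) * b n j' (-k₂)) * (∑ m, b i' m k₁ * a m (-k₁))))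
        + (if k₁ = k₂ ∧ i = j then (1 : A) else 0) := by
  have hab'' : ∀ (p' n : Fin N), a p' (-k₁) * b n j (-k₂) =
      ∑ c₁, ∑ d₁, ∑ d₂, ∑ c₂,
        (R (-k₂) (-k₁) (n, p') (d₁, c₁) * R (-k₁) k₂ (c₁, d₂) (c₂, j)) •
          (b d₁ d₂ (-k₂) * a c₂ (-k₁)) := by
    intro p' n
    simpa [neg_neg] using hab (-k₁) (-k₂) p' n j
  rw [Finset.sum_mul]
  conv_lhs => enter [2, p]; rw [Finset.mul_sum]
  conv_lhs =>
    enter [2, p, 2, n]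
    rw [← mul_assoc, mul_assoc (b i p k₁), haad (-k₁) (-k₂) p n, mul_add, add_mul]
  conv_lhs => enter [2, p]; rw [Finset.sum_add_distrib]
  rw [Finset.sum_add_distrib]
  have hδ : (∑ p, ∑ n, (b i p k₁ * if -k₁ = -k₂ ∧ p = n then (1:A) else 0) * b n j (-k₂))
      = if k₁ = k₂ ∧ i = j then (1:A) else 0 := by
    simp only [mul_ite, mul_one, mul_zero, ite_mul, zero_mul, ite_and, neg_inj,
      Finset.sum_ite_irrel, Finset.sum_const_zero, Finset.sum_ite_eq,
      Finset.mem_univ, if_true]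
    split_ifs with h h2
    · subst h
      simpa [h2] using bb_entry b hbb k₁ i j
    · subst h
      simpa [h2] using bb_entry b hbb k₁ i j
    · rfl
  rw [hδ]
  have hmain : (∑ p, ∑ n, (b i p k₁ *
        ∑ p', ∑ n', R (-k₁) (-k₂) (p, n') (p', n) • (adag n' (-k₂) * a p' (-k₁)))
          * b n j (-k₂))
      = ∑ i', ∑ j', R k₁ k₂ (i, j') (i', j) •
          ((∑ n, adag n (-k₂) * b n j' (-k₂)) * (∑ m, b i' m k₁ * a m (-k₁))) := by
    simp only [Finset.mul_sum, Finset.sum_mul, mul_smul_comm, smul_mul_assoc,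
      ← mul_assoc]
    conv_lhs => enter [2, p, 2, n, 2, p', 2, n', 2, 1, 1]; rw [hbad k₁ (-k₂) i p n']
    simp only [Finset.sum_mul, smul_mul_assoc, smul_smul, mul_assoc]
    conv_lhs =>
      enter [2, p, 2, n, 2, p', 2, n', 2, 2, m₁, 2, i₁, 2, i₂, 2, m₂, 2, 2, 2]
      rw [hab'' p' n]
    simp (config := { maxSteps := 10000000 }) only [Finset.mul_sum, Finset.smul_sum, mul_smul_comm, smul_smul]
    rw [Finset.sum_comm]
    conv_lhs => enter [2, q0]; rw [Finset.sum_comm]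
    conv_lhs => enter [2, q0, 2, q1]; rw [Finset.sum_comm]
    conv_lhs => enter [2, q0, 2, q1, 2, q2]; rw [Finset.sum_comm]
    conv_lhs => enter [2, q0, 2, q1, 2, q2, 2, q3]; rw [Finset.sum_comm]
    conv_lhs => enter [2, q0, 2, q1, 2, q2, 2, q3, 2, q4]; rw [Finset.sum_comm]
    conv_lhs => enter [2, q0, 2, q1, 2, q2, 2, q3, 2, q4, 2, q5]; rw [Finset.sum_comm]
    conv_lhs => enter [2, q0, 2, q1, 2, q2, 2, q3, 2, q4, 2, q5, 2, q6]; rw [Finset.sum_comm]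
    conv_lhs => enter [2, q0, 2, q1, 2, q2, 2, q3, 2, q4, 2, q5, 2, q6, 2, q7]; rw [Finset.sum_comm]
    conv_lhs => enter [2, q0, 2, q1, 2, q2, 2, q3, 2, q4, 2, q5, 2, q6, 2, q7, 2, q8]; rw [Finset.sum_comm]
    conv_lhs => enter [2, q0, 2, q1, 2, q2, 2, q3, 2, q4, 2, q5, 2, q6, 2, q7, 2, q8, 2, q9]; rw [Finset.sum_comm]
    conv_lhs => enter [2, q0, 2, q1]; rw [Finset.sum_comm]
    conv_lhs => enter [2, q0, 2, q1, 2, q2]; rw [Finset.sum_comm]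
    conv_lhs => enter [2, q0, 2, q1, 2, q2, 2, q3]; rw [Finset.sum_comm]
    conv_lhs => enter [2, q0, 2, q1, 2, q2, 2, q3, 2, q4]; rw [Finset.sum_comm]
    conv_lhs => enter [2, q0, 2, q1, 2, q2, 2, q3, 2, q4, 2, q5]; rw [Finset.sum_comm]
    conv_lhs => enter [2, q0, 2, q1, 2, q2, 2, q3, 2, q4, 2, q5, 2, q6]; rw [Finset.sum_comm]
    conv_lhs => enter [2, q0, 2, q1, 2, q2, 2, q3, 2, q4, 2, q5, 2, q6, 2, q7]; rw [Finset.sum_comm]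
    conv_lhs => enter [2, q0, 2, q1, 2, q2, 2, q3, 2, q4, 2, q5, 2, q6, 2, q7, 2, q8]; rw [Finset.sum_comm]
    have hc1 : ∀ (n p' m₂ i₂ : Fin N) (C₁ C₂ : ℂ) (X : A),
        (∑ n', ∑ p, (R (-k₁) (-k₂) (p, n') (p', n) *
            (C₁ * R (-k₂) (-k₁) (m₂, i₂) (n', p) * C₂)) • X)
          = if (m₂, i₂) = (n, p') then (C₁ * C₂) • X else 0 := by
      intro n p' m₂ i₂ C₁ C₂ X
      have e : ∀ n' p : Fin N, (R (-k₁) (-k₂) (p, n') (p', n) *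
          (C₁ * R (-k₂) (-k₁) (m₂, i₂) (n', p) * C₂)) • X
          = (R (-k₂) (-k₁) (m₂, i₂) (n', p) * R (-k₁) (-k₂) (p, n') (p', n)) •
            ((C₁ * C₂) • X) := by
        intro n' p
        rw [show R (-k₁) (-k₂) (p, n') (p', n) * (C₁ * R (-k₂) (-k₁) (m₂, i₂) (n', p) * C₂)
            = (R (-k₂) (-k₁) (m₂, i₂) (n', p) * R (-k₁) (-k₂) (p, n') (p', n)) * (C₁ * C₂)
          from by ring, mul_smul]
      simp only [e, ← Finset.sum_smul]
      rw [unit_entry R hunit (-k₂) (-k₁) (m₂, i₂) n p']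
      simp [ite_smul]
    simp only [hc1]
    simp only [Prod.mk.injEq, ite_and, Finset.sum_ite_irrel, Finset.sum_const_zero,
      Finset.sum_ite_eq, Finset.sum_ite_eq', Finset.mem_univ, if_true]
    conv_lhs => enter [2, q0]; rw [Finset.sum_comm]
    rw [Finset.sum_comm]
    conv_lhs => enter [2, q0, 2, q1, 2, q2]; rw [Finset.sum_comm]
    conv_lhs => enter [2, q0, 2, q1]; rw [Finset.sum_comm]
    conv_lhs => enter [2, q0]; rw [Finset.sum_comm]
    conv_lhs => enter [2, q0, 2, q1, 2, q2, 2, q3, 2, q4]; rw [Finset.sum_comm]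
    conv_lhs => enter [2, q0, 2, q1, 2, q2, 2, q3]; rw [Finset.sum_comm]
    conv_lhs => enter [2, q0, 2, q1, 2, q2]; rw [Finset.sum_comm]
    conv_lhs => enter [2, q0, 2, q1]; rw [Finset.sum_comm]
    conv_lhs => enter [2, q0, 2, q1, 2, q2, 2, q3, 2, q4, 2, q5]; rw [Finset.sum_comm]
    conv_lhs => enter [2, q0, 2, q1, 2, q2, 2, q3, 2, q4]; rw [Finset.sum_comm]
    conv_lhs => enter [2, q0, 2, q1, 2, q2, 2, q3]; rw [Finset.sum_comm]
    conv_lhs => enter [2, q0, 2, q1, 2, q2]; rw [Finset.sum_comm]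
    conv_lhs => enter [2, q0, 2, q1, 2, q2, 2, q3, 2, q4, 2, q5]; rw [Finset.sum_comm]
    conv_lhs => enter [2, q0, 2, q1, 2, q2, 2, q3, 2, q4]; rw [Finset.sum_comm]
    conv_lhs => enter [2, q0, 2, q1, 2, q2, 2, q3]; rw [Finset.sum_comm]
    conv_lhs => enter [2, q0, 2, q1, 2, q2, 2, q3, 2, q4]; rw [Finset.sum_comm]
    -- Stage C: reflection equation pointwise
    trans (∑ m₁ : Fin N, ∑ c₁ : Fin N, ∑ d₂ : Fin N, ∑ c₂ : Fin N,
      ∑ w : Fin N, ∑ v : Fin N, ∑ u : Fin N, ∑ n₀ : Fin N,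
        ((R k₁ k₂ (i, n₀) (u, v) * R k₂ (-k₁) (v, w) (d₂, c₁)) *
            R (-k₁) k₂ (c₁, d₂) (c₂, j)) •
          (adag m₁ (-k₂) * (b m₁ n₀ (-k₂) * (b u w k₁ * a c₂ (-k₁)))))
    · refine Finset.sum_congr rfl fun m₁ _ => Finset.sum_congr rfl fun c₁ _ =>
        Finset.sum_congr rfl fun d₂ _ => Finset.sum_congr rfl fun c₂ _ => ?_
      calc (∑ d₁ : Fin N, ∑ p' : Fin N, ∑ n : Fin N, ∑ i₁ : Fin N,
            (R k₁ (-k₂) (i, m₁) (i₁, n) *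
              (R (-k₂) (-k₁) (n, p') (d₁, c₁) * R (-k₁) k₂ (c₁, d₂) (c₂, j))) •
              (adag m₁ (-k₂) * (b i₁ p' k₁ * (b d₁ d₂ (-k₂) * a c₂ (-k₁)))))
          = R (-k₁) k₂ (c₁, d₂) (c₂, j) • (adag m₁ (-k₂) *
              ((∑ x, ∑ w, ∑ v, ∑ u,
                (R k₁ (-k₂) (i, m₁) (u, v) * R (-k₂) (-k₁) (v, w) (x, c₁)) •
                  (b u w k₁ * b x d₂ (-k₂))) * a c₂ (-k₁))) := by
            simp only [Finset.sum_mul, Finset.mul_sum, Finset.smul_sum,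
              smul_mul_assoc, mul_smul_comm, smul_smul, mul_assoc, mul_comm,
              mul_left_comm]
        _ = R (-k₁) k₂ (c₁, d₂) (c₂, j) • (adag m₁ (-k₂) *
              ((∑ w, ∑ v, ∑ u, ∑ n₀,
                (R k₁ k₂ (i, n₀) (u, v) * R k₂ (-k₁) (v, w) (d₂, c₁)) •
                  (b m₁ n₀ (-k₂) * b u w k₁)) * a c₂ (-k₁))) := by
            rw [refl_entry R b hrefl k₁ k₂ i m₁ c₁ d₂]
        _ = ∑ w : Fin N, ∑ v : Fin N, ∑ u : Fin N, ∑ n₀ : Fin N,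
            ((R k₁ k₂ (i, n₀) (u, v) * R k₂ (-k₁) (v, w) (d₂, c₁)) *
                R (-k₁) k₂ (c₁, d₂) (c₂, j)) •
              (adag m₁ (-k₂) * (b m₁ n₀ (-k₂) * (b u w k₁ * a c₂ (-k₁)))) := by
            simp only [Finset.sum_mul, Finset.mul_sum, Finset.smul_sum,
              smul_mul_assoc, mul_smul_comm, smul_smul, mul_assoc, mul_comm,
              mul_left_comm]
    -- Stage D: second contraction
    conv_lhs => enter [2, q0, 2, q1]; rw [Finset.sum_comm]
    conv_lhs => enter [2, q0]; rw [Finset.sum_comm]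
    conv_lhs => enter [2, q0, 2, q1, 2, q2]; rw [Finset.sum_comm]
    conv_lhs => enter [2, q0, 2, q1]; rw [Finset.sum_comm]
    conv_lhs => enter [2, q0, 2, q1, 2, q2, 2, q3]; rw [Finset.sum_comm]
    conv_lhs => enter [2, q0, 2, q1, 2, q2]; rw [Finset.sum_comm]
    conv_lhs => enter [2, q0, 2, q1, 2, q2, 2, q3, 2, q4]; rw [Finset.sum_comm]
    conv_lhs => enter [2, q0, 2, q1, 2, q2, 2, q3]; rw [Finset.sum_comm]
    conv_lhs => enter [2, q0, 2, q1, 2, q2, 2, q3, 2, q4, 2, q5]; rw [Finset.sum_comm]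
    conv_lhs => enter [2, q0, 2, q1, 2, q2, 2, q3, 2, q4]; rw [Finset.sum_comm]
    have hc2 : ∀ (v w c₂ u n₀ : Fin N) (X : A),
        (∑ c₁, ∑ d₂, ((R k₁ k₂ (i, n₀) (u, v) * R k₂ (-k₁) (v, w) (d₂, c₁)) *
            R (-k₁) k₂ (c₁, d₂) (c₂, j)) • X)
          = if (v, w) = (j, c₂) then R k₁ k₂ (i, n₀) (u, v) • X else 0 := by
      intro v w c₂ u n₀ X
      have e : ∀ c₁ d₂ : Fin N, ((R k₁ k₂ (i, n₀) (u, v) * R k₂ (-k₁) (v, w) (d₂, c₁)) *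
          R (-k₁) k₂ (c₁, d₂) (c₂, j)) • X
          = (R k₂ (-k₁) (v, w) (d₂, c₁) * R (-k₁) k₂ (c₁, d₂) (c₂, j)) •
            (R k₁ k₂ (i, n₀) (u, v) • X) := by
        intro c₁ d₂
        rw [show (R k₁ k₂ (i, n₀) (u, v) * R k₂ (-k₁) (v, w) (d₂, c₁)) *
            R (-k₁) k₂ (c₁, d₂) (c₂, j)
            = (R k₂ (-k₁) (v, w) (d₂, c₁) * R (-k₁) k₂ (c₁, d₂) (c₂, j)) *
              R k₁ k₂ (i, n₀) (u, v) from by ring, mul_smul]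
      simp only [e, ← Finset.sum_smul]
      rw [Finset.sum_comm, unit_entry R hunit k₂ (-k₁) (v, w) j c₂]
      simp [ite_smul]
    simp only [hc2]
    simp only [Prod.mk.injEq, ite_and, Finset.sum_ite_irrel, Finset.sum_const_zero,
      Finset.sum_ite_eq, Finset.sum_ite_eq', Finset.mem_univ, if_true]
    conv_lhs => enter [2, q0]; rw [Finset.sum_comm]
    rw [Finset.sum_comm]
    conv_lhs => enter [2, q0, 2, q1]; rw [Finset.sum_comm]
    conv_lhs => enter [2, q0]; rw [Finset.sum_comm]
    conv_lhs => enter [2, q0, 2, q1]; rw [Finset.sum_comm]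
  rw [hmain]
end P4

/-- given the ZF/boundary exchange relations (with Kronecker-delta
discretization of `δ(k₁∓k₂)`), the boundary generators satisfy
`ã₁ ã₂† = ã₂† R₁₂ ã₁ + ½ δ₁₂ + ½ b₁₂`. -/
theorem tilde_a_tilde_adag_exchange {N : ℕ} {A : Type*} [Ring A] [Algebra ℂ A]
    (R : ℝ → ℝ → TwoLeg N ℂ)
    (a adag : Fin N → ℝ → A) (b : Fin N → Fin N → ℝ → A)
    (hunit : ∀ k₁ k₂ : ℝ, R k₁ k₂ * flipM (R k₂ k₁) = 1)
    (haa : ∀ (k₁ k₂ : ℝ) (i j : Fin N),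
      a i k₁ * a j k₂ =
        ∑ i' : Fin N, ∑ j' : Fin N,
          R k₂ k₁ (j, i) (j', i') • (a j' k₂ * a i' k₁))
    (hadad : ∀ (k₁ k₂ : ℝ) (i j : Fin N),
      adag i k₁ * adag j k₂ =
        ∑ i' : Fin N, ∑ j' : Fin N,
          R k₂ k₁ (j', i') (j, i) • (adag j' k₂ * adag i' k₁))
    (haad : ∀ (k₁ k₂ : ℝ) (i j : Fin N),
      a i k₁ * adag j k₂ =
        (∑ i' : Fin N, ∑ j' : Fin N,
          R k₁ k₂ (i, j') (i', j) • (adag j' k₂ * a i' k₁)) +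
        (if k₁ = k₂ ∧ i = j then (1 : A) else 0))
    (hab : ∀ (k₁ k₂ : ℝ) (i m n : Fin N),
      a i k₁ * b m n k₂ =
        ∑ i₁ : Fin N, ∑ m₁ : Fin N, ∑ m₂ : Fin N, ∑ i₂ : Fin N,
          (R k₂ k₁ (m, i) (m₁, i₁) * R k₁ (-k₂) (i₁, m₂) (i₂, n)) •
            (b m₁ m₂ k₂ * a i₂ k₁))
    (hbad : ∀ (k₁ k₂ : ℝ) (i j m : Fin N),
      b i j k₁ * adag m k₂ =
        ∑ m₁ : Fin N, ∑ i₁ : Fin N, ∑ i₂ : Fin N, ∑ m₂ : Fin N,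
          (R k₁ k₂ (i, m₁) (i₁, m₂) * R k₂ (-k₁) (m₂, i₂) (m, j)) •
            (adag m₁ k₂ * b i₁ i₂ k₁))
    (hrefl : ∀ k₁ k₂ : ℝ,
      cmap A (R k₁ k₂) * leg1 (bmat b k₁) * cmap A (flipM (R k₂ (-k₁))) *
          leg2 (bmat b k₂) =
        leg2 (bmat b k₂) * cmap A (R k₁ (-k₂)) * leg1 (bmat b k₁) *
          cmap A (flipM (R (-k₂) (-k₁))))
    (hbb : ∀ k : ℝ, bmat b k * bmat b (-k) = 1) :
    ∀ (k₁ k₂ : ℝ) (i j : Fin N),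
      tilA a b i k₁ * tilAdag adag b j k₂ =
        (∑ i' : Fin N, ∑ j' : Fin N,
          R k₁ k₂ (i, j') (i', j) • (tilAdag adag b j' k₂ * tilA a b i' k₁)) +
        ((2 : ℂ)⁻¹) • (if k₁ = k₂ ∧ i = j then (1 : A) else 0) +
        ((2 : ℂ)⁻¹) • (if k₁ = -k₂ then b i j k₁ else 0) := by
  intro k₁ k₂ i j
  have hP1 := haad k₁ k₂ i j
  have hP2 := P2 R a adag b hunit haad hab k₁ k₂ i j
  have hP3 := P3 R a adag b hunit haad hbad k₁ k₂ i j
  have hP4 := P4 R a adag b hunit haad hab hbad hrefl hbb k₁ k₂ i j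
  simp only [tilA, tilAdag]
  rw [smul_mul_assoc, mul_smul_comm, smul_smul]
  rw [add_mul, mul_add, mul_add]
  rw [hP1, hP2, hP3, hP4]
  have key : ∀ (Y X : A), ((2:ℂ)⁻¹ • Y) * ((2:ℂ)⁻¹ • X)
      = ((2:ℂ)⁻¹ * (2:ℂ)⁻¹) • (Y * X) := by
    intro Y X; rw [smul_mul_assoc, mul_smul_comm, smul_smul]
  conv_rhs => enter [1, 1, 2, i', 2, j']; rw [key, smul_comm]
  conv_rhs => enter [1, 1, 2, i']; rw [← Finset.smul_sum]
  conv_rhs => enter [1, 1]; rw [← Finset.smul_sum]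
  conv_rhs => enter [1, 1, 2, 2, i', 2, j', 2]; rw [add_mul, mul_add, mul_add]
  simp only [smul_add, Finset.sum_add_distrib]
  module
end

section
/- In the boundary algebra B_R^B (where ρ = id, i.e., ã†(−k) b(−k) = ã†(k) and b(k) ã(−k) = ã(k)), the odd Hamiltonians vanish: H^(2n+1) := ∫ dk k^(2n+1) ã†(k)·ã(k) = 0 for all n ≥ 0. (Discretized version: for a sign-symmetric finite set K ⊂ ℝ of spectral parameters, ∑_{k∈K} k^(2n+1) ã†(k)·ã(k) = 0.) -/
open Matrix

/-- The discretized Hamiltonian `H^(m) = ∑_{k∈K} k^m ã†(k)·ã(k)`. -/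
noncomputable def Ham {N : ℕ} {A : Type*} [Ring A] [Algebra ℂ A]
    (K : Finset ℝ) (m : ℕ) (ta tadag : Fin N → ℝ → A) : A :=
  ∑ k ∈ K, ((k : ℂ) ^ m) • ∑ i : Fin N, tadag i k * ta i k

lemma S_even {N : ℕ} {A : Type*} [Ring A] [Algebra ℂ A]
    (ta tadag : Fin N → ℝ → A) (b : Fin N → Fin N → ℝ → A)
    (hbb : ∀ k : ℝ, bmat b k * bmat b (-k) = 1)
    (hrho1 : ∀ (i : Fin N) (k : ℝ),
      ∑ j : Fin N, tadag j (-k) * b j i (-k) = tadag i k)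
    (hrho2 : ∀ (i : Fin N) (k : ℝ),
      ∑ j : Fin N, b i j k * ta j (-k) = ta i k) (k : ℝ) :
    ∑ i : Fin N, tadag i k * ta i k = ∑ i : Fin N, tadag i (-k) * ta i (-k) := by
  have hbb' : bmat b (-k) * bmat b k = 1 := by
    have := hbb (-k); rwa [neg_neg] at this
  calc ∑ i : Fin N, tadag i k * ta i k
      = ∑ i : Fin N, (∑ j : Fin N, tadag j (-k) * b j i (-k)) *
          (∑ l : Fin N, b i l k * ta l (-k)) := by
        simp_rw [hrho1, hrho2]
    _ = ∑ i : Fin N, ∑ j : Fin N, ∑ l : Fin N,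
          tadag j (-k) * b j i (-k) * (b i l k * ta l (-k)) := by
        simp_rw [Finset.sum_mul, Finset.mul_sum]
    _ = ∑ j : Fin N, ∑ i : Fin N, ∑ l : Fin N,
          tadag j (-k) * b j i (-k) * (b i l k * ta l (-k)) := Finset.sum_comm
    _ = ∑ j : Fin N, ∑ l : Fin N, ∑ i : Fin N,
          tadag j (-k) * b j i (-k) * (b i l k * ta l (-k)) :=
        Finset.sum_congr rfl fun j _ => Finset.sum_comm
    _ = ∑ j : Fin N, ∑ l : Fin N,
          tadag j (-k) * (∑ i : Fin N, b j i (-k) * b i l k) * ta l (-k) := by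
        refine Finset.sum_congr rfl fun j _ => Finset.sum_congr rfl fun l _ => ?_
        rw [Finset.mul_sum, Finset.sum_mul]
        exact Finset.sum_congr rfl fun i _ => by rw [mul_assoc, mul_assoc, mul_assoc]
    _ = ∑ j : Fin N, ∑ l : Fin N,
          tadag j (-k) * ((1 : Matrix (Fin N) (Fin N) A) j l) * ta l (-k) := by
        refine Finset.sum_congr rfl fun j _ => Finset.sum_congr rfl fun l _ => ?_
        have h2 := congrArg (fun M => M j l) hbb'
        simp only [Matrix.mul_apply, bmat, Matrix.of_apply] at h2
        rw [h2]
    _ = ∑ i : Fin N, tadag i (-k) * ta i (-k) := by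
        refine Finset.sum_congr rfl fun j _ => ?_
        rw [Finset.sum_eq_single j]
        · simp [Matrix.one_apply]
        · intro l _ hl; simp [Matrix.one_apply, Ne.symm hl]
        · intro h; exact absurd (Finset.mem_univ j) h

/-- in `B_R^B` (where `ρ = id`), the odd Hamiltonians vanish:
`H^(2n+1) = ∑_{k∈K} k^(2n+1) ã†(k)·ã(k) = 0`, for a sign-symmetric finite set
`K` of spectral parameters. -/
theorem odd_hamiltonians_vanish {N : ℕ} {A : Type*} [Ring A] [Algebra ℂ A]
    (K : Finset ℝ) (hK : ∀ k ∈ K, -k ∈ K)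
    (ta tadag : Fin N → ℝ → A) (b : Fin N → Fin N → ℝ → A)
    (hbb : ∀ k : ℝ, bmat b k * bmat b (-k) = 1)
    (hrho1 : ∀ (i : Fin N) (k : ℝ),
      ∑ j : Fin N, tadag j (-k) * b j i (-k) = tadag i k)
    (hrho2 : ∀ (i : Fin N) (k : ℝ),
      ∑ j : Fin N, b i j k * ta j (-k) = ta i k) :
    ∀ n : ℕ, Ham K (2 * n + 1) ta tadag = 0 := by
  intro n
  unfold Ham
  refine Finset.sum_involution (fun k _ => -k) ?_ ?_ (fun k hk => hK k hk)
    (fun k _ => neg_neg k)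
  · intro k hk
    rw [← S_even ta tadag b hbb hrho1 hrho2 k]
    have : ((-k : ℝ) : ℂ) ^ (2 * n + 1) = -(((k : ℝ) : ℂ) ^ (2 * n + 1)) := by
      push_cast
      rw [Odd.neg_pow ⟨n, by ring⟩]
    rw [this, neg_smul, add_neg_cancel]
  · intro k _ hne h
    apply hne
    have hk0 : k = 0 := by linarith
    simp [hk0]
end

section
/- For the Yangian R-matrix R(k) = (k I + ig P)/(k + ig), the constant diagonal matrices B(k) = diag(ε₁,…,ε_N) with εᵢ ∈ {+1,−1} satisfy both the reflection equation R₁₂(k₁−k₂) B₁ R₂₁(k₂+k₁) B₂ = B₂ R₁₂(k₁+k₂) B₁ R₂₁(−k₂+k₁) and the unitarity condition B(k)B(−k) = I. -/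
open Matrix

lemma leg1_diag {N : ℕ} (ε : Fin N → ℂ) :
    leg1 (Matrix.diagonal ε) = Matrix.diagonal (fun p => ε p.1) := by
  ext p q
  simp [leg1, Matrix.diagonal, Prod.ext_iff]
  aesop

lemma leg2_diag {N : ℕ} (ε : Fin N → ℂ) :
    leg2 (Matrix.diagonal ε) = Matrix.diagonal (fun p => ε p.2) := by
  ext p q
  simp [leg2, Matrix.diagonal, Prod.ext_iff]
  aesop

lemma Pmat_mul {N : ℕ} (M : TwoLeg N ℂ) :
    Pmat N * M = Matrix.of fun p q => M (p.2, p.1) q := by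
  ext p q
  rw [Matrix.mul_apply]
  rw [Finset.sum_eq_single (p.2, p.1)]
  · simp [Pmat]
  · intro r _ hr
    have : ¬(p.1 = r.2 ∧ p.2 = r.1) := by
      rintro ⟨h1, h2⟩; exact hr (by cases r; simp_all)
    simp [Pmat, this]
  · simp

lemma mul_Pmat {N : ℕ} (M : TwoLeg N ℂ) :
    M * Pmat N = Matrix.of fun p q => M p (q.2, q.1) := by
  ext p q
  rw [Matrix.mul_apply]
  rw [Finset.sum_eq_single (q.2, q.1)]
  · simp [Pmat]
  · intro r _ hr
    have : ¬(r.1 = q.2 ∧ r.2 = q.1) := by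
      rintro ⟨h1, h2⟩; exact hr (by cases r; simp_all)
    simp [Pmat, this]
  · simp

lemma flipM_Ryang {N : ℕ} (g : ℝ) (k : ℂ) : flipM (Ryang N g k) = Ryang N g k := by
  ext p q
  simp [flipM, Ryang, Pmat, Matrix.one_apply, Prod.ext_iff, and_comm]

lemma Pmat_sq {N : ℕ} : Pmat N * Pmat N = 1 := by
  rw [Pmat_mul]
  ext p q
  simp [Pmat, Matrix.one_apply, Prod.ext_iff, and_comm]

lemma Pmat_diag1 {N : ℕ} (ε : Fin N → ℂ) :
    Pmat N * Matrix.diagonal (fun p : Fin N × Fin N => ε p.1) =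
      Matrix.diagonal (fun p : Fin N × Fin N => ε p.2) * Pmat N := by
  ext p q
  simp only [Matrix.mul_diagonal, Matrix.diagonal_mul, Pmat, Matrix.of_apply]
  split_ifs with h
  · rw [h.2]; ring
  · simp

lemma Pmat_diag2 {N : ℕ} (ε : Fin N → ℂ) :
    Pmat N * Matrix.diagonal (fun p : Fin N × Fin N => ε p.2) =
      Matrix.diagonal (fun p : Fin N × Fin N => ε p.1) * Pmat N := by
  ext p q
  simp only [Matrix.mul_diagonal, Matrix.diagonal_mul, Pmat, Matrix.of_apply]
  split_ifs with h
  · rw [h.1]; ring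
  · simp

/-- for the Yangian R-matrix, the constant diagonal matrices
`B = diag(ε₁,…,ε_N)` with `εᵢ = ±1` satisfy the reflection equation
`R₁₂(k₁−k₂) B₁ R₂₁(k₂+k₁) B₂ = B₂ R₁₂(k₁+k₂) B₁ R₂₁(k₁−k₂)` and the unitarity
condition `B(k)B(−k) = B² = 1`. -/
theorem diagonal_reflection_matrices {N : ℕ} (g : ℝ) (k₁ k₂ : ℂ)
    (h1 : (k₁ - k₂) + Complex.I * g ≠ 0)
    (h2 : (k₁ + k₂) + Complex.I * g ≠ 0)
    (ε : Fin N → ℂ) (hε : ∀ i, ε i = 1 ∨ ε i = -1) :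
    (Ryang N g (k₁ - k₂) * leg1 (Matrix.diagonal ε) *
        flipM (Ryang N g (k₂ + k₁)) * leg2 (Matrix.diagonal ε) =
      leg2 (Matrix.diagonal ε) * Ryang N g (k₁ + k₂) *
        leg1 (Matrix.diagonal ε) * flipM (Ryang N g (k₁ - k₂))) ∧
    Matrix.diagonal ε * Matrix.diagonal ε = 1 := by
  have hsq : ∀ i, ε i * ε i = 1 := by
    intro i; rcases hε i with h | h <;> rw [h] <;> ring
  constructor
  · set P := Pmat N with hP
    set A : TwoLeg N ℂ := Matrix.diagonal (fun p => ε p.1) with hA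
    set B : TwoLeg N ℂ := Matrix.diagonal (fun p => ε p.2) with hB
    have hA2 : A * A = 1 := by
      rw [hA, Matrix.diagonal_mul_diagonal]
      ext p q; simp [Matrix.diagonal, hsq, Matrix.one_apply]
    have hB2 : B * B = 1 := by
      rw [hB, Matrix.diagonal_mul_diagonal]
      ext p q; simp [Matrix.diagonal, hsq, Matrix.one_apply]
    have hAB : A * B = B * A := by
      rw [hA, hB, Matrix.diagonal_mul_diagonal, Matrix.diagonal_mul_diagonal]
      simp [mul_comm]
    have hPA : P * A = B * P := Pmat_diag1 ε
    have hPB : P * B = A * P := Pmat_diag2 ε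
    have hPP : P * P = 1 := Pmat_sq
    have hPA' : ∀ X : TwoLeg N ℂ, P * (A * X) = B * (P * X) := fun X => by
      rw [← mul_assoc, hPA, mul_assoc]
    have hPB' : ∀ X : TwoLeg N ℂ, P * (B * X) = A * (P * X) := fun X => by
      rw [← mul_assoc, hPB, mul_assoc]
    have hPP' : ∀ X : TwoLeg N ℂ, P * (P * X) = X := fun X => by
      rw [← mul_assoc, hPP, one_mul]
    have hA2' : ∀ X : TwoLeg N ℂ, A * (A * X) = X := fun X => by
      rw [← mul_assoc, hA2, one_mul]
    have hB2' : ∀ X : TwoLeg N ℂ, B * (B * X) = X := fun X => by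
      rw [← mul_assoc, hB2, one_mul]
    have hAB' : ∀ X : TwoLeg N ℂ, A * (B * X) = B * (A * X) := fun X => by
      rw [← mul_assoc, hAB, mul_assoc]
    rw [flipM_Ryang, flipM_Ryang, leg1_diag, leg2_diag, show k₂ + k₁ = k₁ + k₂ by ring,
      ← hA, ← hB]
    unfold Ryang
    simp only [smul_mul_assoc, mul_smul_comm, mul_add, add_mul, smul_add, smul_smul,
      mul_assoc, one_mul, mul_one, ← hP]
    simp only [hPA', hPB', hPP', hA2', hB2', hAB', hPA, hPB, hPP, hA2, hB2, hAB,
      mul_one, one_mul]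
    module
  · rw [Matrix.diagonal_mul_diagonal]
    ext p q; simp [Matrix.diagonal, hsq, Matrix.one_apply]
end
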